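/- arXiv:2601.05691 — 9 statements merged into one kernel-verified Lean document; each statement's English description precedes it below -/
import Mathlib

section
/- (χ-coherence) The 2-category Fib_𝒞 is 2-thin: any two 2-cells of Fib_𝒞 with the same source 1-cell and the same target 1-cell are equal. Equivalently, every hom-category of Fib_𝒞 is a preorder; in particular, every 2-cell of Fib_𝒞 between composites 𝐟^* and 𝐠^* of generating 1-cells equals the generating 2-cell χ_(𝐟,𝐠) of the polygon type determined by its boundary. -/
open CategoryTheory

universe v u

namespace FibPolygraph

variable {C : Type u} [Category.{v} C]

/-- The value of a path: the composite of its arrows. A path `p : Path A B`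
represents the 1-cell `p^* : ℰ_B → ℰ_A` of `Fib_C`. -/
abbrev pathVal {A B : C} (p : Quiver.Path A B) : A ⟶ B :=
  CategoryTheory.composePath p

/-- Formal 2-cells of the free strict 2-category on the pseudofunctorial
signature `Σ*_C`: generating 2-cells `χ_(𝐟,𝐠)` for polygon types,
identities, vertical composition, and whiskering by generating 1-cells on
either side. -/
inductive Cell2 : ∀ {A B : C}, Quiver.Path A B → Quiver.Path A B → Type (max u v)
  | id : ∀ {A B : C} (p : Quiver.Path A B), Cell2 p p
  | gen : ∀ {A B : C} (p q : Quiver.Path A B), pathVal p = pathVal q → Cell2 p q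
  | vcomp : ∀ {A B : C} {p q r : Quiver.Path A B}, Cell2 p q → Cell2 q r → Cell2 p r
  | whiskIn : ∀ {A' A B : C} {p q : Quiver.Path A B} (a : A' ⟶ A),
      Cell2 p q → Cell2 ((a.toPath).comp p) ((a.toPath).comp q)
  | whiskOut : ∀ {A B B' : C} {p q : Quiver.Path A B} (b : B ⟶ B'),
      Cell2 p q → Cell2 (p.cons b) (q.cons b)

namespace Cell2

/-- Transport a 2-cell along equalities of its boundary 1-cells. -/
def cast {A B : C} {p p' q q' : Quiver.Path A B} (hp : p = p') (hq : q = q')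
    (θ : Cell2 p q) : Cell2 p' q' := hp ▸ hq ▸ θ

/-- Whiskering on the codomain side by a composite (path) 1-cell. -/
def whiskOutPath {A B B' : C} (k : Quiver.Path B B') {p q : Quiver.Path A B}
    (θ : Cell2 p q) : Cell2 (p.comp k) (q.comp k) :=
  match k with
  | .nil => θ
  | .cons k' e => whiskOut e (whiskOutPath k' θ)

/-- Whiskering on the domain side by a composite (path) 1-cell. -/
def whiskInPath : ∀ {A' A B : C} (h : Quiver.Path A' A) {p q : Quiver.Path A B},
    Cell2 p q → Cell2 (h.comp p) (h.comp q)
  | _, _, _, Quiver.Path.nil, p, q, θ =>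
      cast (Quiver.Path.nil_comp p).symm (Quiver.Path.nil_comp q).symm θ
  | _, _, _, Quiver.Path.cons h' e, p, q, θ =>
      cast (by rw [← Quiver.Path.comp_assoc]; rfl) (by rw [← Quiver.Path.comp_assoc]; rfl)
        (whiskInPath h' (whiskIn e θ))

end Cell2

/-- The congruence on formal 2-cells generated by the structural laws of a
(strict) 2-category together with the relations (1), (2), (3.1) and (3.2) of
the presentation of `Fib_C`. -/
inductive Rel : ∀ {A B : C} {p q : Quiver.Path A B}, Cell2 p q → Cell2 p q → Prop
  | refl {A B : C} {p q : Quiver.Path A B} (θ : Cell2 p q) : Rel θ θ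
  | symm {A B : C} {p q : Quiver.Path A B} {θ ψ : Cell2 p q} : Rel θ ψ → Rel ψ θ
  | trans {A B : C} {p q : Quiver.Path A B} {θ ψ ξ : Cell2 p q} :
      Rel θ ψ → Rel ψ ξ → Rel θ ξ
  | vcomp_congr {A B : C} {p q r : Quiver.Path A B} {θ θ' : Cell2 p q} {ψ ψ' : Cell2 q r} :
      Rel θ θ' → Rel ψ ψ' → Rel (θ.vcomp ψ) (θ'.vcomp ψ')
  | whiskIn_congr {A' A B : C} {p q : Quiver.Path A B} (a : A' ⟶ A) {θ θ' : Cell2 p q} :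
      Rel θ θ' → Rel (Cell2.whiskIn a θ) (Cell2.whiskIn a θ')
  | whiskOut_congr {A B B' : C} {p q : Quiver.Path A B} (b : B ⟶ B') {θ θ' : Cell2 p q} :
      Rel θ θ' → Rel (Cell2.whiskOut b θ) (Cell2.whiskOut b θ')
  -- hom-categories are categories
  | assoc {A B : C} {p q r s : Quiver.Path A B}
      (θ : Cell2 p q) (ψ : Cell2 q r) (ξ : Cell2 r s) :
      Rel ((θ.vcomp ψ).vcomp ξ) (θ.vcomp (ψ.vcomp ξ))
  | id_vcomp {A B : C} {p q : Quiver.Path A B} (θ : Cell2 p q) :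
      Rel ((Cell2.id p).vcomp θ) θ
  | vcomp_id {A B : C} {p q : Quiver.Path A B} (θ : Cell2 p q) :
      Rel (θ.vcomp (Cell2.id q)) θ
  -- whiskering is functorial
  | whiskIn_id {A' A B : C} (a : A' ⟶ A) (p : Quiver.Path A B) :
      Rel (Cell2.whiskIn a (Cell2.id p)) (Cell2.id ((a.toPath).comp p))
  | whiskOut_id {A B B' : C} (b : B ⟶ B') (p : Quiver.Path A B) :
      Rel (Cell2.whiskOut b (Cell2.id p)) (Cell2.id (p.cons b))
  | whiskIn_vcomp {A' A B : C} (a : A' ⟶ A) {p q r : Quiver.Path A B}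
      (θ : Cell2 p q) (ψ : Cell2 q r) :
      Rel (Cell2.whiskIn a (θ.vcomp ψ))
        ((Cell2.whiskIn a θ).vcomp (Cell2.whiskIn a ψ))
  | whiskOut_vcomp {A B B' : C} (b : B ⟶ B') {p q r : Quiver.Path A B}
      (θ : Cell2 p q) (ψ : Cell2 q r) :
      Rel (Cell2.whiskOut b (θ.vcomp ψ))
        ((Cell2.whiskOut b θ).vcomp (Cell2.whiskOut b ψ))
  -- whiskerings on the two sides commute
  | whisk_comm {A' A B B' : C} (a : A' ⟶ A) (b : B ⟶ B') {p q : Quiver.Path A B}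
      (θ : Cell2 p q) :
      Rel (Cell2.whiskIn a (Cell2.whiskOut b θ))
        (Cell2.whiskOut b (Cell2.whiskIn a θ))
  -- the interchange (exchange) law
  | exchange {A B D : C} {p q : Quiver.Path A B} {r s : Quiver.Path B D}
      (θ : Cell2 p q) (ψ : Cell2 r s) :
      Rel ((Cell2.whiskOutPath r θ).vcomp (Cell2.whiskInPath q ψ))
        ((Cell2.whiskInPath p ψ).vcomp (Cell2.whiskOutPath s θ))
  -- relation (1): identity
  | rel_id {A B : C} (p : Quiver.Path A B) (h : pathVal p = pathVal p) :
      Rel (Cell2.gen p p h) (Cell2.id p)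
  -- relation (2): vertical pasting
  | rel_vcomp {A B : C} (p q r : Quiver.Path A B)
      (h : pathVal p = pathVal q) (h' : pathVal q = pathVal r) :
      Rel ((Cell2.gen p q h).vcomp (Cell2.gen q r h')) (Cell2.gen p r (h.trans h'))
  -- relation (3.1): whiskering on the domain side
  | rel_whiskIn {A' A B : C} (a : A' ⟶ A) (p q : Quiver.Path A B)
      (h : pathVal p = pathVal q) :
      Rel (Cell2.whiskIn a (Cell2.gen p q h))
        (Cell2.gen ((a.toPath).comp p) ((a.toPath).comp q) (by simp [h]))
  -- relation (3.2): whiskering on the codomain side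
  | rel_whiskOut {A B B' : C} (b : B ⟶ B') (p q : Quiver.Path A B)
      (h : pathVal p = pathVal q) :
      Rel (Cell2.whiskOut b (Cell2.gen p q h))
        (Cell2.gen (p.cons b) (q.cons b) (by simp [h]))

instance cellSetoid {A B : C} (p q : Quiver.Path A B) : Setoid (Cell2 p q) :=
  ⟨fun θ ψ => Rel θ ψ, ⟨fun θ => Rel.refl θ, fun h => Rel.symm h, fun h h' => Rel.trans h h'⟩⟩

/-- The 2-cells of the string-diagrammatic 2-category `Fib_C` from `p^*` to `q^*`:
formal 2-cells modulo the congruence generated by the relations. -/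
abbrev Fib2 {A B : C} (p q : Quiver.Path A B) : Type (max u v) :=
  Quotient (cellSetoid p q)

namespace Fib2

/-- The identity 2-cell on `p^*`. -/
def id {A B : C} (p : Quiver.Path A B) : Fib2 p p := ⟦Cell2.id p⟧

/-- The generating 2-cell `χ_(𝐩,𝐪)` of a polygon type `(𝐩,𝐪)`. -/
def gen {A B : C} (p q : Quiver.Path A B) (h : pathVal p = pathVal q) : Fib2 p q :=
  ⟦Cell2.gen p q h⟧

/-- Vertical composition of 2-cells of `Fib_C`. -/
def vcomp {A B : C} {p q r : Quiver.Path A B} (θ : Fib2 p q) (ψ : Fib2 q r) :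
    Fib2 p r :=
  Quotient.liftOn₂ θ ψ (fun a b => (⟦a.vcomp b⟧ : Fib2 p r))
    (fun _ _ _ _ ha hb => Quotient.sound (Rel.vcomp_congr ha hb))

end Fib2

end FibPolygraph

open FibPolygraph

namespace FibPolygraph

theorem Cell2.val_eq {C : Type u} [Category.{v} C] :
    ∀ {A B : C} {p q : Quiver.Path A B}, Cell2 p q → pathVal p = pathVal q
  | _, _, _, _, .id _ => rfl
  | _, _, _, _, .gen _ _ h => h
  | _, _, _, _, .vcomp θ ψ => (Cell2.val_eq θ).trans (Cell2.val_eq ψ)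
  | _, _, _, _, .whiskIn a θ => by
      simp [pathVal, Cell2.val_eq θ]
  | _, _, _, _, .whiskOut b θ => by
      simp [pathVal, Cell2.val_eq θ]

theorem Cell2.rel_gen {C : Type u} [Category.{v} C] :
    ∀ {A B : C} {p q : Quiver.Path A B} (θ : Cell2 p q),
      Rel θ (Cell2.gen p q θ.val_eq)
  | _, _, _, _, .id p => Rel.symm (Rel.rel_id p rfl)
  | _, _, _, _, .gen _ _ _ => Rel.refl _
  | _, _, _, _, .vcomp θ ψ =>
      Rel.trans (Rel.vcomp_congr θ.rel_gen ψ.rel_gen) (Rel.rel_vcomp _ _ _ _ _)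
  | _, _, _, _, .whiskIn a θ =>
      Rel.trans (Rel.whiskIn_congr a θ.rel_gen) (Rel.rel_whiskIn a _ _ _)
  | _, _, _, _, .whiskOut b θ =>
      Rel.trans (Rel.whiskOut_congr b θ.rel_gen) (Rel.rel_whiskOut b _ _ _)

end FibPolygraph

/-- **χ-coherence.** The 2-category `Fib_C` is 2-thin: any two
2-cells with the same source 1-cell and the same target 1-cell are equal
(every hom-category is a preorder); in particular every 2-cell from `𝐟^*` to
`𝐠^*` equals the generating 2-cell `χ_(𝐟,𝐠)` of the polygon type determined by
its boundary. -/
theorem fib_two_thin {C : Type u} [CategoryTheory.Category.{v} C] :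
    (∀ {A B : C} (p q : Quiver.Path A B) (θ ψ : Fib2 p q), θ = ψ) ∧
    (∀ {A B : C} (p q : Quiver.Path A B) (h : pathVal p = pathVal q)
      (θ : Fib2 p q), θ = Fib2.gen p q h) := by
  have key : ∀ {A B : C} (p q : Quiver.Path A B) (h : pathVal p = pathVal q)
      (θ : Fib2 p q), θ = Fib2.gen p q h := by
    intro A B p q h θ
    induction θ using Quotient.inductionOn with
    | h a => exact Quotient.sound (by convert a.rel_gen; exact Iff.rfl)
  refine ⟨fun p q θ ψ => ?_, key⟩
  have h : pathVal p = pathVal q := by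
    induction θ using Quotient.inductionOn with
    | h a => exact a.val_eq
  rw [key p q h θ, key p q h ψ]
end

section
/- Let (X, α) be a T_f-algebra. Define φ := f₂^*(α) ∘ (χ₁)_{f_! X} ∘ f₁^*((η_f)_X) : f₁^* X ⟶ f₂^* X and ψ := f₁^*(α) ∘ (χ₁⁻¹)_{f_! X} ∘ f₂^*((η_f)_X) : f₂^* X ⟶ f₁^* X. Then ψ ∘ φ = id_{f₁^* X} and φ ∘ ψ = id_{f₂^* X}; in particular φ is an isomorphism f₁^* X ≅ f₂^* X. -/
open CategoryTheory

universe v' u' v u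

namespace BRPaper

variable (C : Type u) [Category.{v} C] (E : C → Type u') [∀ A, Category.{v'} (E A)]

/-- A cloven bifibration over `C`, modeled as a contravariant pseudofunctor `pull`
(with coherence isomorphisms `ι`, `κ` satisfying the pseudofunctor axioms)
together with chosen left adjoints `push f ⊣ pull f`. -/
structure ClovenBifib where
  pull : ∀ {B A : C}, (B ⟶ A) → (E A ⥤ E B)
  ι : ∀ B : C, 𝟭 (E B) ≅ pull (𝟙 B)
  κ : ∀ {X Y Z : C} (f : Y ⟶ Z) (g : X ⟶ Y), pull f ⋙ pull g ≅ pull (g ≫ f)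
  push : ∀ {B A : C}, (B ⟶ A) → (E B ⥤ E A)
  adj : ∀ {B A : C} (f : B ⟶ A), push f ⊣ pull f
  κ_id_left : ∀ {B A : C} (f : B ⟶ A),
    CategoryTheory.Functor.whiskerLeft (pull f) (ι B).hom ≫ (κ f (𝟙 B)).hom =
      eqToHom (by rw [Category.id_comp, Functor.comp_id])
  κ_id_right : ∀ {B A : C} (g : B ⟶ A),
    CategoryTheory.Functor.whiskerRight (ι A).hom (pull g) ≫ (κ (𝟙 A) g).hom =
      eqToHom (by rw [Category.comp_id, Functor.id_comp])
  κ_assoc : ∀ {X Y Z W : C} (f : Z ⟶ W) (g : Y ⟶ Z) (h : X ⟶ Y),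
    CategoryTheory.Functor.whiskerRight (κ f g).hom (pull h) ≫ (κ (g ≫ f) h).hom =
      CategoryTheory.Functor.whiskerLeft (pull f) (κ g h).hom ≫ (κ f (h ≫ g)).hom ≫
        eqToHom (by rw [Category.assoc])

variable {C E}
variable (P : ClovenBifib C E)

namespace ClovenBifib

/-- The mate of a 2-cell `θ : g^* ∘ e^* ⟶ k^* ∘ h^*`. -/
def mate {A₀ B₀ C₀ D₀ : C} {e : B₀ ⟶ A₀} {g : C₀ ⟶ B₀} {k : C₀ ⟶ D₀} {h : D₀ ⟶ A₀}
    (θ : P.pull e ⋙ P.pull g ⟶ P.pull h ⋙ P.pull k) :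
    P.pull g ⋙ P.push k ⟶ P.push e ⋙ P.pull h :=
  Functor.whiskerRight (P.adj e).unit (P.pull g ⋙ P.push k) ≫
    Functor.whiskerRight (Functor.whiskerLeft (P.push e) θ) (P.push k) ≫
    Functor.whiskerLeft (P.push e ⋙ P.pull h) (P.adj k).counit

/-- The two-fold mate of a 2-cell `θ : g^* ∘ e^* ⟶ k^* ∘ h^*`. -/
def twoMate {A₀ B₀ C₀ D₀ : C} {e : B₀ ⟶ A₀} {g : C₀ ⟶ B₀} {k : C₀ ⟶ D₀} {h : D₀ ⟶ A₀}
    (θ : P.pull e ⋙ P.pull g ⟶ P.pull h ⋙ P.pull k) :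
    P.push k ⋙ P.push h ⟶ P.push g ⋙ P.push e :=
  Functor.whiskerRight (P.adj g).unit (P.push k ⋙ P.push h) ≫
    Functor.whiskerRight (Functor.whiskerLeft (P.push g) (P.mate θ)) (P.push h) ≫
    Functor.whiskerLeft (P.push g ⋙ P.push e) (P.adj h).counit

/-- The Beck–Chevalley transformation of a commutative square `a ≫ d = c ≫ b`. -/
def BC {A₀ B₀ C₀ D₀ : C} (a : A₀ ⟶ B₀) (c : A₀ ⟶ C₀) (d : B₀ ⟶ D₀) (b : C₀ ⟶ D₀)
    (sq : a ≫ d = c ≫ b) :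
    P.pull a ⋙ P.push c ⟶ P.push d ⋙ P.pull b :=
  P.mate ((P.κ d a).hom ≫ eqToHom (by rw [sq]) ≫ (P.κ b c).inv)

/-- The Beck–Chevalley property: the Beck–Chevalley transformation of every
pullback square is an isomorphism. -/
def BCCond : Prop :=
  ∀ ⦃A₀ B₀ C₀ D₀ : C⦄ (a : A₀ ⟶ B₀) (c : A₀ ⟶ C₀) (d : B₀ ⟶ D₀) (b : C₀ ⟶ D₀)
    (sq : a ≫ d = c ≫ b), IsPullback a c d b → IsIso (P.BC a c d b sq)

/-- The inverse (backward) Beck–Chevalley transformation. -/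
noncomputable def BCinv {A₀ B₀ C₀ D₀ : C} (a : A₀ ⟶ B₀) (c : A₀ ⟶ C₀) (d : B₀ ⟶ D₀)
    (b : C₀ ⟶ D₀) (sq : a ≫ d = c ≫ b) (hiso : IsIso (P.BC a c d b sq)) :
    P.push d ⋙ P.pull b ⟶ P.pull a ⋙ P.push c :=
  @CategoryTheory.inv _ _ _ _ (P.BC a c d b sq) hiso

variable {A B : C}

/-- The canonical isomorphism `χ₁ : f₁^* ∘ f^* ≅ f₂^* ∘ f^*` for the kernel pair of `f`. -/
def chi1 (f : B ⟶ A) {BAB : C} (f₁ f₂ : BAB ⟶ B) (hf : f₁ ≫ f = f₂ ≫ f) :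
    P.pull f ⋙ P.pull f₁ ≅ P.pull f ⋙ P.pull f₂ :=
  P.κ f f₁ ≪≫ eqToIso (by rw [hf]) ≪≫ (P.κ f f₂).symm

/-- The canonical isomorphism `d_i : Id ≅ Δ^* ∘ f_i^*`. -/
def dIso {BAB : C} (fi : BAB ⟶ B) (Δ : B ⟶ BAB) (hΔ : Δ ≫ fi = 𝟙 B) :
    𝟭 (E B) ≅ P.pull fi ⋙ P.pull Δ :=
  P.ι B ≪≫ eqToIso (by rw [hΔ]) ≪≫ (P.κ fi Δ).symm

/-- The canonical isomorphism `j_i : π^* ∘ f_i^* ≅ π'^* ∘ f_i^*`. -/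
def jIso {BAB Q : C} (fi : BAB ⟶ B) (π π' : Q ⟶ BAB) (hπ : π ≫ fi = π' ≫ fi) :
    P.pull fi ⋙ P.pull π ≅ P.pull fi ⋙ P.pull π' :=
  P.κ fi π ≪≫ eqToIso (by rw [hπ]) ≪≫ (P.κ fi π').symm

/-- The canonical isomorphism `j : π₂^* ∘ f₂^* ≅ π₁^* ∘ f₁^*`. -/
def jCross {BAB Q : C} (f₁ f₂ : BAB ⟶ B) (π₁ π₂ : Q ⟶ BAB) (hππ : π₂ ≫ f₂ = π₁ ≫ f₁) :
    P.pull f₂ ⋙ P.pull π₂ ≅ P.pull f₁ ⋙ P.pull π₁ :=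
  P.κ f₂ π₂ ≪≫ eqToIso (by rw [hππ]) ≪≫ (P.κ f₁ π₁).symm

/-- Multiplication of the monad `T_f = f^* ∘ f_!`. -/
def Tmul (f : B ⟶ A) (X : E B) :
    (P.pull f).obj ((P.push f).obj ((P.pull f).obj ((P.push f).obj X))) ⟶
      (P.pull f).obj ((P.push f).obj X) :=
  (P.pull f).map ((P.adj f).counit.app ((P.push f).obj X))

/-- `φ := f₂^*(α) ∘ (χ₁)_{f_! X} ∘ f₁^*((η_f)_X)`. -/
def phi (f : B ⟶ A) {BAB : C} (f₁ f₂ : BAB ⟶ B) (hf : f₁ ≫ f = f₂ ≫ f)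
    (X : E B) (α : (P.pull f).obj ((P.push f).obj X) ⟶ X) :
    (P.pull f₁).obj X ⟶ (P.pull f₂).obj X :=
  (P.pull f₁).map ((P.adj f).unit.app X) ≫
    (P.chi1 f f₁ f₂ hf).hom.app ((P.push f).obj X) ≫ (P.pull f₂).map α

/-- `ψ := f₁^*(α) ∘ (χ₁⁻¹)_{f_! X} ∘ f₂^*((η_f)_X)`. -/
def psi (f : B ⟶ A) {BAB : C} (f₁ f₂ : BAB ⟶ B) (hf : f₁ ≫ f = f₂ ≫ f)
    (X : E B) (α : (P.pull f).obj ((P.push f).obj X) ⟶ X) :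
    (P.pull f₂).obj X ⟶ (P.pull f₁).obj X :=
  (P.pull f₂).map ((P.adj f).unit.app X) ≫
    (P.chi1 f f₁ f₂ hf).inv.app ((P.push f).obj X) ≫ (P.pull f₁).map α

/-- `β := (ε_{f₂})_X ∘ (f₂)_!(φ)`. -/
def betaMap {BAB : C} (f₁ f₂ : BAB ⟶ B) (X : E B)
    (φ : (P.pull f₁).obj X ⟶ (P.pull f₂).obj X) :
    (P.push f₂).obj ((P.pull f₁).obj X) ⟶ X :=
  (P.push f₂).map φ ≫ (P.adj f₂).counit.app X

/-- The unit `η'` of the monad `(f₂)_! ∘ f₁^*`. -/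
def eta' {BAB : C} (f₁ f₂ : BAB ⟶ B) (Δ : B ⟶ BAB)
    (hΔ₁ : Δ ≫ f₁ = 𝟙 B) (hΔ₂ : Δ ≫ f₂ = 𝟙 B) (X : E B) :
    X ⟶ (P.push f₂).obj ((P.pull f₁).obj X) :=
  (P.dIso f₁ Δ hΔ₁).hom.app X ≫
    (P.pull Δ).map ((P.adj f₂).unit.app ((P.pull f₁).obj X)) ≫
    (P.dIso f₂ Δ hΔ₂).inv.app ((P.push f₂).obj ((P.pull f₁).obj X))

/-- `k₂ : (f₂)_! ∘ (π₁)_! ⟶ (f₂)_! ∘ π_!`, the two-fold mate of `j₂`. -/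
def kTwo {BAB Q : C} (f₂ : BAB ⟶ B) (π π₁ : Q ⟶ BAB) (hπ₂ : π ≫ f₂ = π₁ ≫ f₂) :
    P.push π₁ ⋙ P.push f₂ ⟶ P.push π ⋙ P.push f₂ :=
  P.twoMate (P.jIso f₂ π π₁ hπ₂).hom

/-- The multiplication `μ'` of the monad `(f₂)_! ∘ f₁^*`. -/
noncomputable def mu' {BAB Q : C} (f₁ f₂ : BAB ⟶ B) (π₁ π₂ π : Q ⟶ BAB)
    (hππ : π₂ ≫ f₂ = π₁ ≫ f₁) (hπ₁ : π ≫ f₁ = π₂ ≫ f₁) (hπ₂ : π ≫ f₂ = π₁ ≫ f₂)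
    (hiso : IsIso (P.BC π₂ π₁ f₂ f₁ hππ)) (X : E B) :
    (P.push f₂).obj ((P.pull f₁).obj ((P.push f₂).obj ((P.pull f₁).obj X))) ⟶
      (P.push f₂).obj ((P.pull f₁).obj X) :=
  (P.push f₂).map ((P.BCinv π₂ π₁ f₂ f₁ hππ hiso).app ((P.pull f₁).obj X)) ≫
    (P.push f₂).map ((P.push π₁).map ((P.jIso f₁ π π₂ hπ₁).inv.app X)) ≫
    (P.kTwo f₂ π π₁ hπ₂).app ((P.pull π).obj ((P.pull f₁).obj X)) ≫
    (P.push f₂).map ((P.adj π).counit.app ((P.pull f₁).obj X))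

end ClovenBifib

end BRPaper

open BRPaper ClovenBifib CategoryTheory

/-- Key computation: for any natural isomorphism `χ : f₁^* ∘ f^* ≅ f₂^* ∘ f^*` and any
`T_f`-algebra `(X, α)`, the composite
`f₁^*(η) ≫ χ ≫ f₂^*(α) ≫ f₂^*(η) ≫ χ⁻¹ ≫ f₁^*(α)` is the identity. -/
theorem benabou_roubaud_key
    {C : Type u} [Category.{v} C]
    {E : C → Type u'} [∀ A, Category.{v'} (E A)] (P : ClovenBifib C E)
    {A B : C} (f : B ⟶ A) {BAB : C} (f₁ f₂ : BAB ⟶ B)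
    (χ : P.pull f ⋙ P.pull f₁ ≅ P.pull f ⋙ P.pull f₂)
    (X : E B) (α : (P.pull f).obj ((P.push f).obj X) ⟶ X)
    (hTA1 : (P.adj f).unit.app X ≫ α = 𝟙 X)
    (hTA2 : P.Tmul f X ≫ α = (P.pull f).map ((P.push f).map α) ≫ α) :
    (P.pull f₁).map ((P.adj f).unit.app X) ≫ χ.hom.app ((P.push f).obj X) ≫
      (P.pull f₂).map α ≫ (P.pull f₂).map ((P.adj f).unit.app X) ≫
      χ.inv.app ((P.push f).obj X) ≫ (P.pull f₁).map α = 𝟙 ((P.pull f₁).obj X) := by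
  -- naturality of the unit at α
  have h1 : α ≫ (P.adj f).unit.app X =
      (P.adj f).unit.app ((P.pull f).obj ((P.push f).obj X)) ≫
        (P.pull f).map ((P.push f).map α) := by
    simpa using ((P.adj f).unit.naturality α).symm
  -- TA2 rewritten
  have h2 : (P.pull f).map ((P.push f).map α) ≫ α =
      (P.pull f).map ((P.adj f).counit.app ((P.push f).obj X)) ≫ α := by
    rw [← hTA2]; rfl
  -- naturality of χ.inv at (P.push f).map α
  have h3 : (P.pull f₂).map ((P.pull f).map ((P.push f).map α)) ≫
      χ.inv.app ((P.push f).obj X) =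
      χ.inv.app ((P.push f).obj ((P.pull f).obj ((P.push f).obj X))) ≫
        (P.pull f₁).map ((P.pull f).map ((P.push f).map α)) := by
    simpa using χ.inv.naturality ((P.push f).map α)
  -- naturality of χ.inv at the counit component
  have h4 : χ.inv.app ((P.push f).obj ((P.pull f).obj ((P.push f).obj X))) ≫
      (P.pull f₁).map ((P.pull f).map ((P.adj f).counit.app ((P.push f).obj X))) =
      (P.pull f₂).map ((P.pull f).map ((P.adj f).counit.app ((P.push f).obj X))) ≫
        χ.inv.app ((P.push f).obj X) := by
    simpa using (χ.inv.naturality ((P.adj f).counit.app ((P.push f).obj X))).symm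
  -- right triangle identity
  have h5 : (P.adj f).unit.app ((P.pull f).obj ((P.push f).obj X)) ≫
      (P.pull f).map ((P.adj f).counit.app ((P.push f).obj X)) =
      𝟙 ((P.pull f).obj ((P.push f).obj X)) :=
    (P.adj f).right_triangle_components ((P.push f).obj X)
  calc
    (P.pull f₁).map ((P.adj f).unit.app X) ≫ χ.hom.app ((P.push f).obj X) ≫
        (P.pull f₂).map α ≫ (P.pull f₂).map ((P.adj f).unit.app X) ≫
        χ.inv.app ((P.push f).obj X) ≫ (P.pull f₁).map α
      = (P.pull f₁).map ((P.adj f).unit.app X) ≫ χ.hom.app ((P.push f).obj X) ≫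
          (P.pull f₂).map ((P.adj f).unit.app ((P.pull f).obj ((P.push f).obj X))) ≫
          ((P.pull f₂).map ((P.pull f).map ((P.push f).map α)) ≫
            χ.inv.app ((P.push f).obj X)) ≫ (P.pull f₁).map α := by
        rw [← Functor.map_comp_assoc, h1, Functor.map_comp_assoc]
        simp only [Category.assoc]
    _ = (P.pull f₁).map ((P.adj f).unit.app X) ≫ χ.hom.app ((P.push f).obj X) ≫
          (P.pull f₂).map ((P.adj f).unit.app ((P.pull f).obj ((P.push f).obj X))) ≫
          χ.inv.app ((P.push f).obj ((P.pull f).obj ((P.push f).obj X))) ≫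
          (P.pull f₁).map ((P.pull f).map ((P.push f).map α)) ≫ (P.pull f₁).map α := by
        rw [h3]; simp only [Category.assoc]
    _ = (P.pull f₁).map ((P.adj f).unit.app X) ≫ χ.hom.app ((P.push f).obj X) ≫
          (P.pull f₂).map ((P.adj f).unit.app ((P.pull f).obj ((P.push f).obj X))) ≫
          (χ.inv.app ((P.push f).obj ((P.pull f).obj ((P.push f).obj X))) ≫
            (P.pull f₁).map ((P.pull f).map ((P.adj f).counit.app ((P.push f).obj X)))) ≫
          (P.pull f₁).map α := by
        rw [← Functor.map_comp, h2, Functor.map_comp]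
        simp only [Category.assoc]
    _ = (P.pull f₁).map ((P.adj f).unit.app X) ≫ χ.hom.app ((P.push f).obj X) ≫
          ((P.pull f₂).map ((P.adj f).unit.app ((P.pull f).obj ((P.push f).obj X))) ≫
            (P.pull f₂).map ((P.pull f).map ((P.adj f).counit.app ((P.push f).obj X)))) ≫
          χ.inv.app ((P.push f).obj X) ≫ (P.pull f₁).map α := by
        rw [h4]; simp only [Category.assoc]
    _ = (P.pull f₁).map ((P.adj f).unit.app X) ≫ χ.hom.app ((P.push f).obj X) ≫
          χ.inv.app ((P.push f).obj X) ≫ (P.pull f₁).map α := by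
        rw [← Functor.map_comp, h5]
        simp
    _ = (P.pull f₁).map ((P.adj f).unit.app X) ≫ (P.pull f₁).map α := by
        rw [Iso.hom_inv_id_app_assoc]
    _ = 𝟙 ((P.pull f₁).obj X) := by
        rw [← Functor.map_comp, hTA1]
        exact (P.pull f₁).map_id X

/-- For a `T_f`-algebra `(X, α)`, the morphisms
`φ := f₂^*(α) ∘ (χ₁)_{f_! X} ∘ f₁^*((η_f)_X)` and
`ψ := f₁^*(α) ∘ (χ₁⁻¹)_{f_! X} ∘ f₂^*((η_f)_X)` are mutually inverse;
in particular `φ` is an isomorphism. -/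
theorem benabou_roubaud_phi_isIso
    {C : Type u} [Category.{v} C] [Limits.HasPullbacks C]
    {E : C → Type u'} [∀ A, Category.{v'} (E A)] (P : ClovenBifib C E)
    {A B : C} (f : B ⟶ A) {BAB : C} (f₁ f₂ : BAB ⟶ B)
    (hf : f₁ ≫ f = f₂ ≫ f) (hkp : IsPullback f₁ f₂ f f)
    (X : E B) (α : (P.pull f).obj ((P.push f).obj X) ⟶ X)
    (hTA1 : (P.adj f).unit.app X ≫ α = 𝟙 X)
    (hTA2 : P.Tmul f X ≫ α = (P.pull f).map ((P.push f).map α) ≫ α) :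
    P.phi f f₁ f₂ hf X α ≫ P.psi f f₁ f₂ hf X α = 𝟙 ((P.pull f₁).obj X) ∧
    P.psi f f₁ f₂ hf X α ≫ P.phi f f₁ f₂ hf X α = 𝟙 ((P.pull f₂).obj X) ∧
    IsIso (P.phi f f₁ f₂ hf X α) := by
  have hfw : P.phi f f₁ f₂ hf X α ≫ P.psi f f₁ f₂ hf X α = 𝟙 ((P.pull f₁).obj X) := by
    have := benabou_roubaud_key P f f₁ f₂ (P.chi1 f f₁ f₂ hf) X α hTA1 hTA2
    simpa [phi, psi, Category.assoc] using this
  have hbw : P.psi f f₁ f₂ hf X α ≫ P.phi f f₁ f₂ hf X α = 𝟙 ((P.pull f₂).obj X) := by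
    have := benabou_roubaud_key P f f₂ f₁ (P.chi1 f f₁ f₂ hf).symm X α hTA1 hTA2
    simpa [phi, psi, Category.assoc] using this
  exact ⟨hfw, hbw, ⟨P.psi f f₁ f₂ hf X α, hfw, hbw⟩⟩
end

section
/- Let (X, α) be a T_f-algebra and let φ := f₂^*(α) ∘ (χ₁)_{f_! X} ∘ f₁^*((η_f)_X) : f₁^* X ⟶ f₂^* X. Then φ satisfies the first descent condition (DD1): Δ^*(φ) ∘ (d₁)_X = (d₂)_X. -/
open CategoryTheory

universe v' u' v u

open BRPaper ClovenBifib CategoryTheory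


section Aux

variable {C : Type u} [Category.{v} C] {E : C → Type u'} [∀ A, Category.{v'} (E A)]
variable (P : ClovenBifib C E)

lemma kappa_assoc_app {X Y Z W : C} (f : Z ⟶ W) (g : Y ⟶ Z) (h : X ⟶ Y) (V : E W) :
    (P.pull h).map ((P.κ f g).hom.app V) ≫ (P.κ (g ≫ f) h).hom.app V =
      (P.κ g h).hom.app ((P.pull f).obj V) ≫ (P.κ f (h ≫ g)).hom.app V ≫
        eqToHom (by rw [Category.assoc]) := by
  have := congr_app (P.κ_assoc f g h) V
  simpa [eqToHom_app] using this

lemma kappa_id_left_app {B A : C} (f : B ⟶ A) (V : E A) :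
    (P.ι B).hom.app ((P.pull f).obj V) ≫ (P.κ f (𝟙 B)).hom.app V =
      eqToHom (by rw [Category.id_comp]; rfl) := by
  have := congr_app (P.κ_id_left f) V
  simpa [eqToHom_app] using this


lemma kappa_snd_hom_congr {X Y Z : C} (f : Y ⟶ Z) {g g' : X ⟶ Y} (hg : g = g') (V : E Z) :
    (P.κ f g).hom.app V =
      eqToHom (by rw [hg]) ≫ (P.κ f g').hom.app V ≫ eqToHom (by rw [hg]) := by
  subst hg; simp

lemma kappa_snd_inv_congr {X Y Z : C} (f : Y ⟶ Z) {g g' : X ⟶ Y} (hg : g = g') (V : E Z) :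
    (P.κ f g).inv.app V =
      eqToHom (by rw [hg]) ≫ (P.κ f g').inv.app V ≫ eqToHom (by rw [hg]) := by
  subst hg; simp

lemma kappa_fst_inv_congr {X Y Z : C} {f f' : Y ⟶ Z} (hfe : f = f') (g : X ⟶ Y) (V : E Z) :
    (P.κ f g).inv.app V =
      eqToHom (by rw [hfe]) ≫ (P.κ f' g).inv.app V ≫ eqToHom (by rw [hfe]) := by
  subst hfe; simp

lemma kappa_id_hom {B A : C} (f : B ⟶ A) (V : E A) :
    (P.κ f (𝟙 B)).hom.app V =
      (P.ι B).inv.app ((P.pull f).obj V) ≫ eqToHom (by rw [Category.id_comp]; rfl) := by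
  rw [← kappa_id_left_app P f V, ← Category.assoc, Iso.inv_hom_id_app]
  simp

lemma kappa_id_inv {B A : C} (f : B ⟶ A) (V : E A) :
    (P.κ f (𝟙 B)).inv.app V =
      eqToHom (by rw [Category.id_comp]; rfl) ≫ (P.ι B).hom.app ((P.pull f).obj V) := by
  rw [← cancel_epi ((P.κ f (𝟙 B)).hom.app V), Iso.hom_inv_id_app, kappa_id_hom P f V]
  simp

lemma pullmap_kappa_hom {X Y Z W : C} (f : Z ⟶ W) (g : Y ⟶ Z) (h : X ⟶ Y) (V : E W) :
    (P.pull h).map ((P.κ f g).hom.app V) =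
      (P.κ g h).hom.app ((P.pull f).obj V) ≫ (P.κ f (h ≫ g)).hom.app V ≫
        eqToHom (by rw [Category.assoc]) ≫ (P.κ (g ≫ f) h).inv.app V := by
  rw [← cancel_mono ((P.κ (g ≫ f) h).hom.app V)]
  simp only [Category.assoc, Iso.inv_hom_id_app, Category.comp_id]
  simpa using kappa_assoc_app P f g h V

lemma pullmap_kappa_inv {X Y Z W : C} (f : Z ⟶ W) (g : Y ⟶ Z) (h : X ⟶ Y) (V : E W) :
    (P.pull h).map ((P.κ f g).inv.app V) =
      (P.κ (g ≫ f) h).hom.app V ≫ eqToHom (by rw [Category.assoc]) ≫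
        (P.κ f (h ≫ g)).inv.app V ≫ (P.κ g h).inv.app ((P.pull f).obj V) := by
  rw [← cancel_epi ((P.pull h).map ((P.κ f g).hom.app V)), ← Functor.map_comp,
    Iso.hom_inv_id_app, CategoryTheory.Functor.map_id, pullmap_kappa_hom P f g h V]
  simp

lemma key_coherence {A B : C} (f : B ⟶ A) {BAB : C} (f₁ f₂ : BAB ⟶ B)
    (hf : f₁ ≫ f = f₂ ≫ f) (Δ : B ⟶ BAB) (hΔ₁ : Δ ≫ f₁ = 𝟙 B) (hΔ₂ : Δ ≫ f₂ = 𝟙 B)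
    (Z : E A) :
    (P.dIso f₁ Δ hΔ₁).hom.app ((P.pull f).obj Z) ≫
        (P.pull Δ).map ((P.chi1 f f₁ f₂ hf).hom.app Z) =
      (P.dIso f₂ Δ hΔ₂).hom.app ((P.pull f).obj Z) := by
  dsimp [ClovenBifib.dIso, ClovenBifib.chi1]
  simp only [eqToIso.hom, eqToIso.inv, eqToHom_app, eqToHom_map, Functor.map_comp,
    Category.assoc]
  rw [pullmap_kappa_hom P f f₁ Δ Z, pullmap_kappa_inv P f f₂ Δ Z,
    kappa_snd_hom_congr P f hΔ₁ Z, kappa_snd_inv_congr P f hΔ₂ Z,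
    kappa_fst_inv_congr P hf Δ Z, kappa_id_hom P, kappa_id_inv P]
  simp [eqToHom_trans]


end Aux

/-- For a `T_f`-algebra `(X, α)`, the morphism
`φ := f₂^*(α) ∘ (χ₁)_{f_! X} ∘ f₁^*((η_f)_X)` satisfies the first descent
condition (DD1): `Δ^*(φ) ∘ (d₁)_X = (d₂)_X`. -/
theorem benabou_roubaud_phi_DD1
    {C : Type u} [Category.{v} C] [Limits.HasPullbacks C]
    {E : C → Type u'} [∀ A, Category.{v'} (E A)] (P : ClovenBifib C E)
    {A B : C} (f : B ⟶ A) {BAB : C} (f₁ f₂ : BAB ⟶ B)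
    (hf : f₁ ≫ f = f₂ ≫ f) (hkp : IsPullback f₁ f₂ f f)
    (Δ : B ⟶ BAB) (hΔ₁ : Δ ≫ f₁ = 𝟙 B) (hΔ₂ : Δ ≫ f₂ = 𝟙 B)
    (X : E B) (α : (P.pull f).obj ((P.push f).obj X) ⟶ X)
    (hTA1 : (P.adj f).unit.app X ≫ α = 𝟙 X)
    (hTA2 : P.Tmul f X ≫ α = (P.pull f).map ((P.push f).map α) ≫ α) :
    (P.dIso f₁ Δ hΔ₁).hom.app X ≫ (P.pull Δ).map (P.phi f f₁ f₂ hf X α) =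
      (P.dIso f₂ Δ hΔ₂).hom.app X := by
  have hnat1 := (P.dIso f₁ Δ hΔ₁).hom.naturality ((P.adj f).unit.app X)
  have hnat2 := (P.dIso f₂ Δ hΔ₂).hom.naturality α
  dsimp at hnat1 hnat2
  dsimp [ClovenBifib.phi]
  simp only [Functor.map_comp, ← Category.assoc]
  rw [← hnat1]
  simp only [Category.assoc]
  slice_lhs 2 3 => rw [key_coherence P f f₁ f₂ hf Δ hΔ₁ hΔ₂ ((P.push f).obj X)]
  slice_lhs 2 3 => rw [← hnat2]
  slice_lhs 1 2 => rw [hTA1]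
  simp
end

section
/- Let (X, φ) be an object of Desc_p(f) (so φ : f₁^* X ≅ f₂^* X satisfies (DD1) and (DD2)). Define β := (ε_{f₂})_X ∘ (f₂)_!(φ) : (f₂)_!(f₁^* X) ⟶ X. Then β satisfies the unit action axiom (AC1): β ∘ η'_X = id_X. -/
open CategoryTheory

universe v' u' v u

open BRPaper ClovenBifib CategoryTheory

/-- If `(X, φ)` is an object of `Desc_p(f)`, then
`β := (ε_{f₂})_X ∘ (f₂)_!(φ)` satisfies the unit action axiom (AC1):
`β ∘ η'_X = id_X`. -/
theorem benabou_roubaud_beta_AC1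
    {C : Type u} [Category.{v} C] [Limits.HasPullbacks C]
    {E : C → Type u'} [∀ A, Category.{v'} (E A)] (P : ClovenBifib C E)
    {A B : C} (f : B ⟶ A) {BAB : C} (f₁ f₂ : BAB ⟶ B)
    (hf : f₁ ≫ f = f₂ ≫ f) (hkp : IsPullback f₁ f₂ f f)
    (Δ : B ⟶ BAB) (hΔ₁ : Δ ≫ f₁ = 𝟙 B) (hΔ₂ : Δ ≫ f₂ = 𝟙 B)
    {Q : C} (π₁ π₂ : Q ⟶ BAB) (hππ : π₂ ≫ f₂ = π₁ ≫ f₁) (hpbQ : IsPullback π₂ π₁ f₂ f₁)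
    (π : Q ⟶ BAB) (hπ₁ : π ≫ f₁ = π₂ ≫ f₁) (hπ₂ : π ≫ f₂ = π₁ ≫ f₂)
    (X : E B) (φ : (P.pull f₁).obj X ≅ (P.pull f₂).obj X)
    (hDD1 : (P.dIso f₁ Δ hΔ₁).hom.app X ≫ (P.pull Δ).map φ.hom =
      (P.dIso f₂ Δ hΔ₂).hom.app X)
    (hDD2 : (P.pull π₂).map φ.hom ≫ (P.jCross f₁ f₂ π₁ π₂ hππ).hom.app X ≫
        (P.pull π₁).map φ.hom =
      (P.jIso f₁ π π₂ hπ₁).inv.app X ≫ (P.pull π).map φ.hom ≫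
        (P.jIso f₂ π π₁ hπ₂).hom.app X) :
    P.eta' f₁ f₂ Δ hΔ₁ hΔ₂ X ≫ P.betaMap f₁ f₂ X φ.hom = 𝟙 X := by
  unfold eta' betaMap
  have nat : (P.dIso f₂ Δ hΔ₂).inv.app ((P.push f₂).obj ((P.pull f₁).obj X)) ≫
      ((P.push f₂).map φ.hom ≫ (P.adj f₂).counit.app X) =
      (P.pull Δ).map ((P.pull f₂).map ((P.push f₂).map φ.hom ≫ (P.adj f₂).counit.app X)) ≫
        (P.dIso f₂ Δ hΔ₂).inv.app X := by
    simpa using ((P.dIso f₂ Δ hΔ₂).inv.naturality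
      ((P.push f₂).map φ.hom ≫ (P.adj f₂).counit.app X)).symm
  have key : (P.adj f₂).unit.app ((P.pull f₁).obj X) ≫
      (P.pull f₂).map ((P.push f₂).map φ.hom ≫ (P.adj f₂).counit.app X) = φ.hom := by
    rw [Functor.map_comp, ← Category.assoc]
    have h := (P.adj f₂).unit.naturality φ.hom
    simp only [Functor.id_map, Functor.comp_map] at h
    rw [← h, Category.assoc, (P.adj f₂).right_triangle_components]
    simp
  simp only [Category.assoc]
  calc (P.dIso f₁ Δ hΔ₁).hom.app X ≫
        (P.pull Δ).map ((P.adj f₂).unit.app ((P.pull f₁).obj X)) ≫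
        (P.dIso f₂ Δ hΔ₂).inv.app ((P.push f₂).obj ((P.pull f₁).obj X)) ≫
        (P.push f₂).map φ.hom ≫ (P.adj f₂).counit.app X
      = (P.dIso f₁ Δ hΔ₁).hom.app X ≫
        (P.pull Δ).map ((P.adj f₂).unit.app ((P.pull f₁).obj X)) ≫
        ((P.pull Δ).map ((P.pull f₂).map ((P.push f₂).map φ.hom ≫ (P.adj f₂).counit.app X)) ≫
          (P.dIso f₂ Δ hΔ₂).inv.app X) := by
        rw [nat]
    _ = (P.dIso f₁ Δ hΔ₁).hom.app X ≫ (P.pull Δ).map φ.hom ≫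
          (P.dIso f₂ Δ hΔ₂).inv.app X := by
        rw [← Category.assoc ((P.pull Δ).map _), ← Functor.map_comp, key]
    _ = 𝟙 X := by
        rw [← Category.assoc, hDD1, Iso.hom_inv_id_app]
        rfl
end

section
/- Assume the Beck–Chevalley property. Let (X, φ) be an object of Desc_p(f) and define β := (ε_{f₂})_X ∘ (f₂)_!(φ) : (f₂)_!(f₁^* X) ⟶ X. Then β satisfies the multiplicative action axiom (AC2): β ∘ μ'_X = β ∘ (f₂)_!(f₁^*(β)). -/
open CategoryTheory

universe v' u' v u

open BRPaper ClovenBifib CategoryTheory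

/-- Assume the Beck–Chevalley property. If `(X, φ)` is an object
of `Desc_p(f)`, then `β := (ε_{f₂})_X ∘ (f₂)_!(φ)` satisfies the multiplicative
action axiom (AC2): `β ∘ μ'_X = β ∘ (f₂)_!(f₁^*(β))`. -/
theorem benabou_roubaud_beta_AC2
    {C : Type u} [Category.{v} C] [Limits.HasPullbacks C]
    {E : C → Type u'} [∀ A, Category.{v'} (E A)] (P : ClovenBifib C E)
    (hBC : P.BCCond)
    {A B : C} (f : B ⟶ A) {BAB : C} (f₁ f₂ : BAB ⟶ B)
    (hf : f₁ ≫ f = f₂ ≫ f) (hkp : IsPullback f₁ f₂ f f)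
    (Δ : B ⟶ BAB) (hΔ₁ : Δ ≫ f₁ = 𝟙 B) (hΔ₂ : Δ ≫ f₂ = 𝟙 B)
    {Q : C} (π₁ π₂ : Q ⟶ BAB) (hππ : π₂ ≫ f₂ = π₁ ≫ f₁) (hpbQ : IsPullback π₂ π₁ f₂ f₁)
    (π : Q ⟶ BAB) (hπ₁ : π ≫ f₁ = π₂ ≫ f₁) (hπ₂ : π ≫ f₂ = π₁ ≫ f₂)
    (X : E B) (φ : (P.pull f₁).obj X ≅ (P.pull f₂).obj X)
    (hDD1 : (P.dIso f₁ Δ hΔ₁).hom.app X ≫ (P.pull Δ).map φ.hom =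
      (P.dIso f₂ Δ hΔ₂).hom.app X)
    (hDD2 : (P.pull π₂).map φ.hom ≫ (P.jCross f₁ f₂ π₁ π₂ hππ).hom.app X ≫
        (P.pull π₁).map φ.hom =
      (P.jIso f₁ π π₂ hπ₁).inv.app X ≫ (P.pull π).map φ.hom ≫
        (P.jIso f₂ π π₁ hπ₂).hom.app X) :
    P.mu' f₁ f₂ π₁ π₂ π hππ hπ₁ hπ₂ (hBC π₂ π₁ f₂ f₁ hππ hpbQ) X ≫
        P.betaMap f₁ f₂ X φ.hom =
      (P.push f₂).map ((P.pull f₁).map (P.betaMap f₁ f₂ X φ.hom)) ≫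
        P.betaMap f₁ f₂ X φ.hom := by
  haveI := hBC π₂ π₁ f₂ f₁ hππ hpbQ
  have hjc : (P.κ f₂ π₂).hom ≫ eqToHom (by rw [hππ]) ≫ (P.κ f₁ π₁).inv
      = (P.jCross f₁ f₂ π₁ π₂ hππ).hom := by
    simp [ClovenBifib.jCross]
  have hU : ∀ {B' A' : C} (g : B' ⟶ A') {U : E B'} {V : E A'} (h : U ⟶ (P.pull g).obj V),
      (P.adj g).unit.app U ≫ (P.pull g).map ((P.push g).map h ≫ (P.adj g).counit.app V)
        = h := by
    intro B' A' g U V h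
    simp
  have hU' : ∀ {B' A' : C} (g : B' ⟶ A') {U : E B'} {V : E A'} (h : U ⟶ (P.pull g).obj V)
      {W' : E B'} (w : (P.pull g).obj V ⟶ W'),
      (P.adj g).unit.app U ≫
        (P.pull g).map ((P.push g).map h ≫ (P.adj g).counit.app V) ≫ w = h ≫ w := by
    intro B' A' g U V h W' w
    rw [← Category.assoc, hU]
  have hn2 : ∀ {U V : E B} (h : U ⟶ V),
      (P.jIso f₂ π π₁ hπ₂).hom.app U ≫ (P.pull π₁).map ((P.pull f₂).map h)
        = (P.pull π).map ((P.pull f₂).map h) ≫ (P.jIso f₂ π π₁ hπ₂).hom.app V := by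
    intro U V h
    simpa using ((P.jIso f₂ π π₁ hπ₂).hom.naturality h).symm
  have hnc : ∀ {U V : E B} (h : U ⟶ V),
      (P.jCross f₁ f₂ π₁ π₂ hππ).hom.app U ≫ (P.pull π₁).map ((P.pull f₁).map h)
        = (P.pull π₂).map ((P.pull f₂).map h) ≫ (P.jCross f₁ f₂ π₁ π₂ hππ).hom.app V := by
    intro U V h
    simpa using ((P.jCross f₁ f₂ π₁ π₂ hππ).hom.naturality h).symm
  have hnc' : ∀ {U V : E B} (h : U ⟶ V) {W' : E Q}
      (w : (P.pull π₁).obj ((P.pull f₁).obj V) ⟶ W'),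
      (P.jCross f₁ f₂ π₁ π₂ hππ).hom.app U ≫ (P.pull π₁).map ((P.pull f₁).map h) ≫ w
        = (P.pull π₂).map ((P.pull f₂).map h) ≫ (P.jCross f₁ f₂ π₁ π₂ hππ).hom.app V ≫ w := by
    intro U V h W' w
    rw [← Category.assoc, hnc, Category.assoc]
  simp only [ClovenBifib.mu', ClovenBifib.betaMap, ClovenBifib.kTwo, ClovenBifib.twoMate,
    ClovenBifib.mate, ClovenBifib.BCinv, ClovenBifib.BC, Functor.whiskerLeft_app, Functor.whiskerRight_app,
    NatTrans.comp_app, Functor.comp_map, Functor.comp_obj, Category.assoc]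
  rw [NatIso.isIso_inv_app, Functor.map_inv, IsIso.inv_comp_eq]
  simp only [ClovenBifib.mate, hjc, Functor.whiskerLeft_app, Functor.whiskerRight_app,
    NatTrans.comp_app, Functor.comp_map, Functor.comp_obj, Category.assoc]
  simp only [← Adjunction.counit_naturality, ← Adjunction.counit_naturality_assoc,
    Category.assoc]
  simp only [← Functor.map_comp, ← Functor.map_comp_assoc]
  congr 1
  refine congrArg _ ?_
  simp only [← Adjunction.counit_naturality, ← Adjunction.counit_naturality_assoc,
    Category.assoc]
  simp only [← Functor.map_comp, ← Functor.map_comp_assoc]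
  congr 1
  refine congrArg _ ?_
  simp only [Category.assoc]
  rw [hn2]
  rw [← Functor.map_comp_assoc]
  rw [hU]
  rw [hU']
  conv_rhs => rw [Functor.map_comp]
  rw [hnc']
  rw [← Functor.map_comp_assoc]
  rw [hU]
  exact hDD2.symm
end

section
/- Assume the Beck–Chevalley property. Then the endofunctor (f₂)_! ∘ f₁^* of ℰ_B, equipped with unit η′ and multiplication μ′, is a monad on ℰ_B (it satisfies the two unit laws and the associativity law of a monad); moreover BC₁ : (f₂)_! ∘ f₁^* ⟶ f^* ∘ f_! is an isomorphism of monads from ((f₂)_! ∘ f₁^*, η′, μ′) to T_f, i.e., BC₁ ∘ η′ = η_f and BC₁ ∘ μ′ = μ ∘ (BC₁ ∗ BC₁), where BC₁ ∗ BC₁ is the horizontal composite of BC₁ with itself and μ is the multiplication of T_f. -/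
open CategoryTheory

universe v' u' v u

namespace BRPaper

variable (C : Type u) [Category.{v} C] (E : C → Type u') [∀ A, Category.{v'} (E A)]

variable {C E}
variable (P : ClovenBifib C E)

namespace ClovenBifib

variable {A B : C}

/-! ### Auxiliary machinery for the Bénabou–Roubaud theorem -/

lemma κ_congr {X Y Z : C} {g g' : Y ⟶ Z} (hg : g = g') {p p' : X ⟶ Y} (hp : p = p') (W : E Z) :
    (P.κ g p).hom.app W =
      eqToHom (by rw [hg, hp]) ≫ (P.κ g' p').hom.app W ≫ eqToHom (by rw [hg, hp]) := by
  subst hg; subst hp; simp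

/-- Canonical iso `p^* g^* u^* W ≅ (p ≫ g ≫ u)^* W`. -/
def NIso {Q₀ Z Y A₀ : C} (p : Q₀ ⟶ Z) (g : Z ⟶ Y) (u : Y ⟶ A₀) (W : E A₀) :
    (P.pull p).obj ((P.pull g).obj ((P.pull u).obj W)) ≅ (P.pull (p ≫ g ≫ u)).obj W :=
  (P.pull p).mapIso ((P.κ u g).app W) ≪≫ (P.κ (g ≫ u) p).app W

lemma kappa_inner {Q₀ Z Y A₀ : C} (p : Q₀ ⟶ Z) (g : Z ⟶ Y) (u : Y ⟶ A₀) (W : E A₀) :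
    (P.κ g p).hom.app ((P.pull u).obj W) =
      (P.NIso p g u W).hom ≫ eqToHom (by rw [Category.assoc]) ≫ (P.κ u (p ≫ g)).inv.app W := by
  have h := congrArg (fun α => α.app W) (P.κ_assoc u g p)
  simp only [NatTrans.comp_app, Functor.whiskerRight_app, Functor.whiskerLeft_app, eqToHom_app] at h
  simp only [NIso, Iso.trans_hom, Functor.mapIso_hom, Iso.app_hom, Category.assoc]
  rw [← Category.assoc, h]
  simp

lemma kappa_inner_inv {Q₀ Z Y A₀ : C} (p : Q₀ ⟶ Z) (g : Z ⟶ Y) (u : Y ⟶ A₀) (W : E A₀) :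
    (P.κ g p).inv.app ((P.pull u).obj W) =
      (P.κ u (p ≫ g)).hom.app W ≫ eqToHom (by rw [Category.assoc]) ≫ (P.NIso p g u W).inv := by
  rw [← cancel_epi ((P.κ g p).hom.app ((P.pull u).obj W)), Iso.hom_inv_id_app,
    P.kappa_inner p g u W]
  simp

lemma cell_inner {Q₀ Z Y A₀ : C} (p p' : Q₀ ⟶ Z) (g g' : Z ⟶ Y) (u : Y ⟶ A₀)
    (h : p ≫ g = p' ≫ g') (W : E A₀) :
    (P.κ g p).hom.app ((P.pull u).obj W) ≫ eqToHom (by rw [h]) ≫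
        (P.κ g' p').inv.app ((P.pull u).obj W) =
      (P.NIso p g u W).hom ≫ eqToHom (by rw [← Category.assoc, h, Category.assoc]) ≫
        (P.NIso p' g' u W).inv := by
  have hci : (P.κ u (p ≫ g)).inv.app W =
      eqToHom (by rw [h]) ≫ (P.κ u (p' ≫ g')).inv.app W ≫
        eqToHom (by rw [h]) := by
    have hc := P.κ_congr (rfl : u = u) h W
    rw [← cancel_epi ((P.κ u (p ≫ g)).hom.app W), Iso.hom_inv_id_app, hc]
    simp
  rw [P.kappa_inner p g u W, P.kappa_inner_inv p' g' u W, hci]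
  simp

lemma whisker_cell {Q₀ Z Y A₀ : C} (p : Q₀ ⟶ Z) (g g' : Z ⟶ Y) (u : Y ⟶ A₀)
    (h : g ≫ u = g' ≫ u) (W : E A₀) :
    (P.pull p).map ((P.κ u g).hom.app W ≫ eqToHom (by rw [h]) ≫ (P.κ u g').inv.app W) =
      (P.NIso p g u W).hom ≫ eqToHom (by rw [h]) ≫ (P.NIso p g' u W).inv := by
  simp only [Functor.map_comp, eqToHom_map, NIso, Iso.trans_hom, Iso.trans_inv,
    Functor.mapIso_hom, Functor.mapIso_inv, Iso.app_hom, Iso.app_inv, Category.assoc]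
  rw [P.κ_congr h (rfl : p = p) W]
  simp

lemma chi1_whisker (f : B ⟶ A) {BAB : C} (f₁ f₂ : BAB ⟶ B) (hf : f₁ ≫ f = f₂ ≫ f)
    {Q₀ : C} (p : Q₀ ⟶ BAB) (W : E A) :
    (P.pull p).map ((P.chi1 f f₁ f₂ hf).hom.app W) =
      (P.NIso p f₁ f W).hom ≫ eqToHom (by rw [hf]) ≫ (P.NIso p f₂ f W).inv := by
  have := P.whisker_cell p f₁ f₂ f hf W
  simpa [chi1] using this

lemma jIso_hom_inner {BAB Q : C} (fi : BAB ⟶ B) (ρ ρ' : Q ⟶ BAB) (hπ : ρ ≫ fi = ρ' ≫ fi)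
    (f : B ⟶ A) (W : E A) :
    (P.jIso fi ρ ρ' hπ).hom.app ((P.pull f).obj W) =
      (P.NIso ρ fi f W).hom ≫ eqToHom (by rw [← Category.assoc, hπ, Category.assoc]) ≫
        (P.NIso ρ' fi f W).inv := by
  have := P.cell_inner ρ ρ' fi fi f hπ W
  simpa [jIso] using this

lemma jIso_inv_inner {BAB Q : C} (fi : BAB ⟶ B) (ρ ρ' : Q ⟶ BAB) (hπ : ρ ≫ fi = ρ' ≫ fi)
    (f : B ⟶ A) (W : E A) :
    (P.jIso fi ρ ρ' hπ).inv.app ((P.pull f).obj W) =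
      (P.NIso ρ' fi f W).hom ≫ eqToHom (by rw [← Category.assoc, ← hπ, Category.assoc]) ≫
        (P.NIso ρ fi f W).inv := by
  have := P.cell_inner ρ' ρ fi fi f hπ.symm W
  simpa [jIso] using this

lemma theta_inner {BAB Q : C} (f₁ f₂ : BAB ⟶ B) (π₁ π₂ : Q ⟶ BAB)
    (hππ : π₂ ≫ f₂ = π₁ ≫ f₁) (f : B ⟶ A) (W : E A) :
    ((P.κ f₂ π₂).hom ≫ eqToHom (by rw [hππ]) ≫ (P.κ f₁ π₁).inv).app ((P.pull f).obj W) =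
      (P.NIso π₂ f₂ f W).hom ≫ eqToHom (by rw [← Category.assoc, hππ, Category.assoc]) ≫
        (P.NIso π₁ f₁ f W).inv := by
  have := P.cell_inner π₂ π₁ f₂ f₁ f hππ W
  simpa using this

lemma dIso_inner {BAB : C} (fi : BAB ⟶ B) (Δ : B ⟶ BAB) (hΔ : Δ ≫ fi = 𝟙 B)
    (f : B ⟶ A) (W : E A) :
    (P.dIso fi Δ hΔ).hom.app ((P.pull f).obj W) =
      (P.ι B).hom.app ((P.pull f).obj W) ≫ (P.κ f (𝟙 B)).hom.app W ≫
        eqToHom (by rw [Category.id_comp, ← Category.assoc, hΔ, Category.id_comp]) ≫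
        (P.NIso Δ fi f W).inv := by
  have hinv := P.kappa_inner_inv Δ fi f W
  have hc := P.κ_congr (rfl : f = f) hΔ W
  simp only [dIso, Iso.trans_hom, Iso.symm_hom, NatTrans.comp_app, eqToIso.hom, eqToHom_app,
    Category.assoc]
  rw [hinv, hc]
  simp

lemma cohA (f : B ⟶ A) {BAB : C} (f₁ f₂ : BAB ⟶ B) (hf : f₁ ≫ f = f₂ ≫ f)
    (Δ : B ⟶ BAB) (hΔ₁ : Δ ≫ f₁ = 𝟙 B) (hΔ₂ : Δ ≫ f₂ = 𝟙 B) (W : E A) :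
    (P.dIso f₁ Δ hΔ₁).hom.app ((P.pull f).obj W) ≫
        (P.pull Δ).map ((P.chi1 f f₁ f₂ hf).hom.app W) =
      (P.dIso f₂ Δ hΔ₂).hom.app ((P.pull f).obj W) := by
  rw [P.dIso_inner f₁ Δ hΔ₁ f W, P.dIso_inner f₂ Δ hΔ₂ f W, P.chi1_whisker f f₁ f₂ hf Δ W]
  simp

lemma cohC (f : B ⟶ A) {BAB Q : C} (f₁ f₂ : BAB ⟶ B) (hf : f₁ ≫ f = f₂ ≫ f)
    (π₁ π₂ π : Q ⟶ BAB) (hππ : π₂ ≫ f₂ = π₁ ≫ f₁)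
    (hπ₁ : π ≫ f₁ = π₂ ≫ f₁) (hπ₂ : π ≫ f₂ = π₁ ≫ f₂) (W : E A) :
    (P.jIso f₁ π π₂ hπ₁).inv.app ((P.pull f).obj W) ≫
        (P.pull π).map ((P.chi1 f f₁ f₂ hf).hom.app W) ≫
        (P.jIso f₂ π π₁ hπ₂).hom.app ((P.pull f).obj W) =
      (P.pull π₂).map ((P.chi1 f f₁ f₂ hf).hom.app W) ≫
        ((P.κ f₂ π₂).hom ≫ eqToHom (by rw [hππ]) ≫ (P.κ f₁ π₁).inv).app ((P.pull f).obj W) ≫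
        (P.pull π₁).map ((P.chi1 f f₁ f₂ hf).hom.app W) := by
  rw [P.jIso_inv_inner f₁ π π₂ hπ₁ f W, P.jIso_hom_inner f₂ π π₁ hπ₂ f W,
    P.theta_inner f₁ f₂ π₁ π₂ hππ f W, P.chi1_whisker f f₁ f₂ hf π W,
    P.chi1_whisker f f₁ f₂ hf π₂ W, P.chi1_whisker f f₁ f₂ hf π₁ W]
  simp

lemma mate_app {A₀ B₀ C₀ D₀ : C} {e : B₀ ⟶ A₀} {g : C₀ ⟶ B₀} {k : C₀ ⟶ D₀} {h : D₀ ⟶ A₀}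
    (θ : P.pull e ⋙ P.pull g ⟶ P.pull h ⋙ P.pull k) (X : E B₀) :
    (P.mate θ).app X =
      (P.push k).map ((P.pull g).map ((P.adj e).unit.app X)) ≫
        (P.push k).map (θ.app ((P.push e).obj X)) ≫
        (P.adj k).counit.app ((P.pull h).obj ((P.push e).obj X)) := by
  simp [mate]

lemma BC1_app {BAB : C} (f : B ⟶ A) (f₁ f₂ : BAB ⟶ B) (hf : f₁ ≫ f = f₂ ≫ f) (X : E B) :
    (P.BC f₁ f₂ f f hf).app X =
      (P.push f₂).map ((P.pull f₁).map ((P.adj f).unit.app X) ≫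
          (P.chi1 f f₁ f₂ hf).hom.app ((P.push f).obj X)) ≫
        (P.adj f₂).counit.app ((P.pull f).obj ((P.push f).obj X)) := by
  rw [BC, P.mate_app, Functor.map_comp, Category.assoc]
  rfl

lemma sharp_cancel {B₀ A₀ : C} (e : B₀ ⟶ A₀) {Y : E B₀} {Z : E A₀}
    {u w : (P.push e).obj Y ⟶ Z}
    (hs : (P.adj e).unit.app Y ≫ (P.pull e).map u =
      (P.adj e).unit.app Y ≫ (P.pull e).map w) : u = w := by
  apply ((P.adj e).homEquiv Y Z).injective
  simpa [Adjunction.homEquiv_unit] using hs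

lemma sharp_push {B₀ A₀ : C} (e : B₀ ⟶ A₀) {Y Y' : E B₀} {Z : E A₀}
    (v : Y ⟶ Y') (u : (P.push e).obj Y' ⟶ Z) :
    (P.adj e).unit.app Y ≫ (P.pull e).map ((P.push e).map v ≫ u) =
      v ≫ (P.adj e).unit.app Y' ≫ (P.pull e).map u := by
  rw [Functor.map_comp, ← Category.assoc, ← Category.assoc]
  congr 1
  exact ((P.adj e).unit.naturality v).symm

lemma sharp_counit {B₀ A₀ : C} (e : B₀ ⟶ A₀) {Y : E B₀} {Z : E A₀}
    (v : Y ⟶ (P.pull e).obj Z) :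
    (P.adj e).unit.app Y ≫ (P.pull e).map ((P.push e).map v ≫ (P.adj e).counit.app Z) = v := by
  rw [P.sharp_push, (P.adj e).right_triangle_components, Category.comp_id]

lemma sharp_eps_post {B₀ A₀ : C} (e : B₀ ⟶ A₀) {Y : E B₀} {Z : E A₀} {Z' : E A₀}
    (v : Y ⟶ (P.pull e).obj Z) (r : Z ⟶ Z') :
    (P.adj e).unit.app Y ≫
        (P.pull e).map ((P.push e).map v ≫ (P.adj e).counit.app Z ≫ r) =
      v ≫ (P.pull e).map r := by
  rw [show (P.push e).map v ≫ (P.adj e).counit.app Z ≫ r =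
        ((P.push e).map v ≫ (P.adj e).counit.app Z) ≫ r by simp,
    Functor.map_comp, ← Category.assoc, P.sharp_counit]

lemma inv_nat_app {D₁ : Type*} [Category D₁] {D₂ : Type*} [Category D₂]
    {F G : D₁ ⥤ D₂} (α : F ⟶ G) [IsIso α] (X : D₁) :
    (CategoryTheory.inv α).app X = CategoryTheory.inv (α.app X) := by
  haveI : IsIso (α.app X) := inferInstance
  symm
  apply IsIso.inv_eq_of_hom_inv_id
  rw [← NatTrans.comp_app, IsIso.hom_inv_id]
  rfl

lemma etaBC (f : B ⟶ A) {BAB : C} (f₁ f₂ : BAB ⟶ B) (hf : f₁ ≫ f = f₂ ≫ f)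
    (Δ : B ⟶ BAB) (hΔ₁ : Δ ≫ f₁ = 𝟙 B) (hΔ₂ : Δ ≫ f₂ = 𝟙 B) (X : E B) :
    P.eta' f₁ f₂ Δ hΔ₁ hΔ₂ X ≫ (P.BC f₁ f₂ f f hf).app X = (P.adj f).unit.app X := by
  set m₀ : (P.pull f₁).obj X ⟶ (P.pull f₂).obj ((P.pull f).obj ((P.push f).obj X)) :=
    (P.pull f₁).map ((P.adj f).unit.app X) ≫
      (P.chi1 f f₁ f₂ hf).hom.app ((P.push f).obj X) with hm₀
  set w : (P.push f₂).obj ((P.pull f₁).obj X) ⟶ (P.pull f).obj ((P.push f).obj X) :=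
    (P.push f₂).map m₀ ≫ (P.adj f₂).counit.app ((P.pull f).obj ((P.push f).obj X)) with hw
  have hBC1 : (P.BC f₁ f₂ f f hf).app X = w := P.BC1_app f f₁ f₂ hf X
  rw [hBC1, eta', Category.assoc, Category.assoc]
  have hnat : (P.dIso f₂ Δ hΔ₂).inv.app ((P.push f₂).obj ((P.pull f₁).obj X)) ≫ w =
      (P.pull Δ).map ((P.pull f₂).map w) ≫
        (P.dIso f₂ Δ hΔ₂).inv.app ((P.pull f).obj ((P.push f).obj X)) :=
    ((P.dIso f₂ Δ hΔ₂).inv.naturality w).symm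
  rw [hnat, ← Category.assoc ((P.pull Δ).map _), ← Functor.map_comp]
  have hsh : (P.adj f₂).unit.app ((P.pull f₁).obj X) ≫ (P.pull f₂).map w = m₀ :=
    P.sharp_counit f₂ m₀
  rw [hsh, hm₀, Functor.map_comp]
  have hnat1 : (P.dIso f₁ Δ hΔ₁).hom.app X ≫
      (P.pull Δ).map ((P.pull f₁).map ((P.adj f).unit.app X)) =
      (P.adj f).unit.app X ≫ (P.dIso f₁ Δ hΔ₁).hom.app ((P.pull f).obj ((P.push f).obj X)) :=
    ((P.dIso f₁ Δ hΔ₁).hom.naturality ((P.adj f).unit.app X)).symm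
  slice_lhs 1 2 => rw [hnat1]
  slice_lhs 2 3 => rw [P.cohA f f₁ f₂ hf Δ hΔ₁ hΔ₂ ((P.push f).obj X)]
  simp

lemma twoMate_app {A₀ B₀ C₀ D₀ : C} {e : B₀ ⟶ A₀} {g : C₀ ⟶ B₀} {k : C₀ ⟶ D₀} {h : D₀ ⟶ A₀}
    (θ : P.pull e ⋙ P.pull g ⟶ P.pull h ⋙ P.pull k) (Z : E C₀) :
    (P.twoMate θ).app Z =
      (P.push h).map ((P.push k).map ((P.adj g).unit.app Z)) ≫
        (P.push h).map ((P.mate θ).app ((P.push g).obj Z)) ≫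
        (P.adj h).counit.app ((P.push e).obj ((P.push g).obj Z)) := by
  simp [twoMate]

lemma BC2_app {BAB Q : C} (f₁ f₂ : BAB ⟶ B) (π₁ π₂ : Q ⟶ BAB) (hππ : π₂ ≫ f₂ = π₁ ≫ f₁)
    (W : E BAB) :
    (P.BC π₂ π₁ f₂ f₁ hππ).app W =
      (P.push π₁).map ((P.pull π₂).map ((P.adj f₂).unit.app W)) ≫
        (P.push π₁).map (((P.κ f₂ π₂).hom ≫ eqToHom (by rw [hππ]) ≫ (P.κ f₁ π₁).inv).app
          ((P.push f₂).obj W)) ≫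
        (P.adj π₁).counit.app ((P.pull f₁).obj ((P.push f₂).obj W)) := by
  rw [BC, P.mate_app]


lemma sharp_step {B₀ A₀ : C} (e : B₀ ⟶ A₀) {Y Y' : E B₀} {W₀ : E B₀}
    (v : Y ⟶ Y') (rest : (P.pull e).obj ((P.push e).obj Y') ⟶ W₀) :
    (P.adj e).unit.app Y ≫ (P.pull e).map ((P.push e).map v) ≫ rest =
      v ≫ (P.adj e).unit.app Y' ≫ rest := by
  rw [← Category.assoc, ← Category.assoc]
  congr 1
  exact ((P.adj e).unit.naturality v).symm

lemma sharp_finish {B₀ A₀ : C} (e : B₀ ⟶ A₀) {Z : E A₀} {W₀ : E B₀}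
    (rest : (P.pull e).obj Z ⟶ W₀) :
    (P.adj e).unit.app ((P.pull e).obj Z) ≫
        (P.pull e).map ((P.adj e).counit.app Z) ≫ rest = rest := by
  rw [← Category.assoc, (P.adj e).right_triangle_components]
  simp

lemma muBC (f : B ⟶ A) {BAB Q : C} (f₁ f₂ : BAB ⟶ B) (hf : f₁ ≫ f = f₂ ≫ f)
    (π₁ π₂ π : Q ⟶ BAB) (hππ : π₂ ≫ f₂ = π₁ ≫ f₁) (hπ₁ : π ≫ f₁ = π₂ ≫ f₁)
    (hπ₂ : π ≫ f₂ = π₁ ≫ f₂) (hiso : IsIso (P.BC π₂ π₁ f₂ f₁ hππ)) (X : E B) :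
    P.mu' f₁ f₂ π₁ π₂ π hππ hπ₁ hπ₂ hiso X ≫ (P.BC f₁ f₂ f f hf).app X =
      ((P.BC f₁ f₂ f f hf).app ((P.push f₂).obj ((P.pull f₁).obj X)) ≫
        (P.pull f).map ((P.push f).map ((P.BC f₁ f₂ f f hf).app X))) ≫ P.Tmul f X := by
  haveI := hiso
  rw [mu', BCinv, inv_nat_app (P.BC π₂ π₁ f₂ f₁ hππ) ((P.pull f₁).obj X)]
  rw [← cancel_epi ((P.push f₂).map ((P.BC π₂ π₁ f₂ f₁ hππ).app ((P.pull f₁).obj X)))]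
  slice_lhs 1 2 => rw [← Functor.map_comp, IsIso.hom_inv_id, CategoryTheory.Functor.map_id]
  rw [Category.id_comp]
  -- expand the structural pieces
  rw [show P.kTwo f₂ π π₁ hπ₂ = P.twoMate (P.jIso f₂ π π₁ hπ₂).hom from rfl,
    P.twoMate_app (P.jIso f₂ π π₁ hπ₂).hom ((P.pull π).obj ((P.pull f₁).obj X)),
    P.BC1_app f f₁ f₂ hf ((P.push f₂).obj ((P.pull f₁).obj X)),
    P.BC2_app f₁ f₂ π₁ π₂ hππ ((P.pull f₁).obj X)]
  -- first transposition, along f₂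
  apply P.sharp_cancel f₂
  simp only [Functor.map_comp, Category.assoc]
  rw [P.sharp_step, P.sharp_step, P.sharp_step]
  simp only [Functor.comp_obj]
  rw [P.sharp_finish]
  rw [P.sharp_step, P.sharp_step, P.sharp_step, P.sharp_step, P.sharp_step]
  simp only [Functor.comp_obj]
  rw [P.sharp_finish]
  -- step 6: kill the π-adjunction unit/counit pair on the left
  have h6a : (P.mate (P.jIso f₂ π π₁ hπ₂).hom).app
        ((P.push π).obj ((P.pull π).obj ((P.pull f₁).obj X))) ≫
        (P.pull f₂).map ((P.push f₂).map ((P.adj π).counit.app ((P.pull f₁).obj X))) =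
      (P.push π₁).map ((P.pull π).map ((P.adj π).counit.app ((P.pull f₁).obj X))) ≫
        (P.mate (P.jIso f₂ π π₁ hπ₂).hom).app ((P.pull f₁).obj X) :=
    ((P.mate (P.jIso f₂ π π₁ hπ₂).hom).naturality
      ((P.adj π).counit.app ((P.pull f₁).obj X))).symm
  rw [reassoc_of% h6a]
  have h6b : (P.push π₁).map ((P.adj π).unit.app ((P.pull π).obj ((P.pull f₁).obj X))) ≫
      (P.push π₁).map ((P.pull π).map ((P.adj π).counit.app ((P.pull f₁).obj X))) = 𝟙 _ := by
    rw [← Functor.map_comp, (P.adj π).right_triangle_components]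
    simp
  rw [reassoc_of% h6b]
  -- second transposition, along π₁
  rw [P.mate_app]
  apply P.sharp_cancel π₁
  simp only [Functor.map_comp, Category.assoc]
  rw [P.sharp_step, P.sharp_step, P.sharp_step]
  simp only [Functor.comp_obj]
  rw [P.sharp_finish]
  rw [P.sharp_step, P.sharp_step]
  simp only [Functor.comp_obj]
  rw [P.sharp_finish]
  -- endgame: reduce both sides to the coherence identity cohC
  have h8b : (P.adj f₂).unit.app ((P.pull f₁).obj X) ≫
      (P.pull f₂).map ((P.BC f₁ f₂ f f hf).app X) =
      (P.pull f₁).map ((P.adj f).unit.app X) ≫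
        (P.chi1 f f₁ f₂ hf).hom.app ((P.push f).obj X) := by
    rw [P.BC1_app]; exact P.sharp_counit f₂ _
  -- LHS
  have h8a : (P.jIso f₂ π π₁ hπ₂).hom.app ((P.push f₂).obj ((P.pull f₁).obj X)) ≫
      (P.pull π₁).map ((P.pull f₂).map ((P.BC f₁ f₂ f f hf).app X)) =
      (P.pull π).map ((P.pull f₂).map ((P.BC f₁ f₂ f f hf).app X)) ≫
        (P.jIso f₂ π π₁ hπ₂).hom.app ((P.pull f).obj ((P.push f).obj X)) :=
    ((P.jIso f₂ π π₁ hπ₂).hom.naturality ((P.BC f₁ f₂ f f hf).app X)).symm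
  rw [h8a]
  have h8b' : (P.pull π).map ((P.adj f₂).unit.app ((P.pull f₁).obj X)) ≫
      (P.pull π).map ((P.pull f₂).map ((P.BC f₁ f₂ f f hf).app X)) =
      (P.pull π).map ((P.pull f₁).map ((P.adj f).unit.app X)) ≫
        (P.pull π).map ((P.chi1 f f₁ f₂ hf).hom.app ((P.push f).obj X)) := by
    rw [← Functor.map_comp, ← Functor.map_comp, h8b]
  rw [reassoc_of% h8b']
  have h8c : (P.jIso f₁ π π₂ hπ₁).inv.app X ≫
      (P.pull π).map ((P.pull f₁).map ((P.adj f).unit.app X)) =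
      (P.pull π₂).map ((P.pull f₁).map ((P.adj f).unit.app X)) ≫
        (P.jIso f₁ π π₂ hπ₁).inv.app ((P.pull f).obj ((P.push f).obj X)) :=
    ((P.jIso f₁ π π₂ hπ₁).inv.naturality ((P.adj f).unit.app X)).symm
  rw [reassoc_of% h8c]
  -- RHS
  have hmerge : (P.pull π₁).map ((P.pull f₂).map ((P.pull f).map ((P.push f).map
        ((P.BC f₁ f₂ f f hf).app X)))) ≫ (P.pull π₁).map ((P.pull f₂).map (P.Tmul f X)) =
      (P.pull π₁).map ((P.pull f₂).map ((P.pull f).map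
        ((P.push f).map ((P.BC f₁ f₂ f f hf).app X) ≫
          (P.adj f).counit.app ((P.push f).obj X)))) := by
    simp only [Tmul, ← Functor.map_comp]
  rw [hmerge]
  have hch : (P.chi1 f f₁ f₂ hf).hom.app ((P.push f).obj ((P.push f₂).obj ((P.pull f₁).obj X))) ≫
      (P.pull f₂).map ((P.pull f).map ((P.push f).map ((P.BC f₁ f₂ f f hf).app X) ≫
        (P.adj f).counit.app ((P.push f).obj X))) =
      (P.pull f₁).map ((P.pull f).map ((P.push f).map ((P.BC f₁ f₂ f f hf).app X) ≫
        (P.adj f).counit.app ((P.push f).obj X))) ≫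
        (P.chi1 f f₁ f₂ hf).hom.app ((P.push f).obj X) :=
    ((P.chi1 f f₁ f₂ hf).hom.naturality ((P.push f).map ((P.BC f₁ f₂ f f hf).app X) ≫
        (P.adj f).counit.app ((P.push f).obj X))).symm
  have h9a : (P.pull π₁).map ((P.chi1 f f₁ f₂ hf).hom.app
        ((P.push f).obj ((P.push f₂).obj ((P.pull f₁).obj X)))) ≫
      (P.pull π₁).map ((P.pull f₂).map ((P.pull f).map ((P.push f).map
        ((P.BC f₁ f₂ f f hf).app X) ≫ (P.adj f).counit.app ((P.push f).obj X)))) =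
      (P.pull π₁).map ((P.pull f₁).map ((P.pull f).map ((P.push f).map
        ((P.BC f₁ f₂ f f hf).app X) ≫ (P.adj f).counit.app ((P.push f).obj X)))) ≫
        (P.pull π₁).map ((P.chi1 f f₁ f₂ hf).hom.app ((P.push f).obj X)) := by
    rw [← Functor.map_comp, ← Functor.map_comp, hch]
  rw [h9a]
  have h9b : (P.adj f).unit.app ((P.push f₂).obj ((P.pull f₁).obj X)) ≫
      (P.pull f).map ((P.push f).map ((P.BC f₁ f₂ f f hf).app X) ≫
        (P.adj f).counit.app ((P.push f).obj X)) = (P.BC f₁ f₂ f f hf).app X :=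
    P.sharp_counit f _
  have h9b' : (P.pull π₁).map ((P.pull f₁).map ((P.adj f).unit.app
        ((P.push f₂).obj ((P.pull f₁).obj X)))) ≫
      (P.pull π₁).map ((P.pull f₁).map ((P.pull f).map ((P.push f).map
        ((P.BC f₁ f₂ f f hf).app X) ≫ (P.adj f).counit.app ((P.push f).obj X)))) =
      (P.pull π₁).map ((P.pull f₁).map ((P.BC f₁ f₂ f f hf).app X)) := by
    rw [← Functor.map_comp, ← Functor.map_comp, h9b]
  rw [reassoc_of% h9b']
  have h9c : ((P.κ f₂ π₂).hom ≫ eqToHom (by rw [hππ]) ≫ (P.κ f₁ π₁).inv).app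
        ((P.push f₂).obj ((P.pull f₁).obj X)) ≫
      (P.pull π₁).map ((P.pull f₁).map ((P.BC f₁ f₂ f f hf).app X)) =
      (P.pull π₂).map ((P.pull f₂).map ((P.BC f₁ f₂ f f hf).app X)) ≫
        ((P.κ f₂ π₂).hom ≫ eqToHom (by rw [hππ]) ≫ (P.κ f₁ π₁).inv).app
          ((P.pull f).obj ((P.push f).obj X)) :=
    (((P.κ f₂ π₂).hom ≫ eqToHom (by rw [hππ]) ≫ (P.κ f₁ π₁).inv).naturality
      ((P.BC f₁ f₂ f f hf).app X)).symm
  rw [reassoc_of% h9c]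
  have h9d : (P.pull π₂).map ((P.adj f₂).unit.app ((P.pull f₁).obj X)) ≫
      (P.pull π₂).map ((P.pull f₂).map ((P.BC f₁ f₂ f f hf).app X)) =
      (P.pull π₂).map ((P.pull f₁).map ((P.adj f).unit.app X)) ≫
        (P.pull π₂).map ((P.chi1 f f₁ f₂ hf).hom.app ((P.push f).obj X)) := by
    rw [← Functor.map_comp, ← Functor.map_comp, h8b]
  rw [reassoc_of% h9d]
  rw [P.cohC f f₁ f₂ hf π₁ π₂ π hππ hπ₁ hπ₂ ((P.push f).obj X)]

end ClovenBifib

end BRPaper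

open BRPaper ClovenBifib CategoryTheory

/-- Assume the Beck–Chevalley property. Then
`((f₂)_! ∘ f₁^*, η′, μ′)` is a monad on `ℰ_B` (two unit laws and associativity),
and `BC₁` is an isomorphism of monads to `T_f`: `BC₁ ∘ η′ = η_f` and
`BC₁ ∘ μ′ = μ ∘ (BC₁ ∗ BC₁)` (componentwise). -/
theorem benabou_roubaud_monad_iso
    {C : Type u} [Category.{v} C] [Limits.HasPullbacks C]
    {E : C → Type u'} [∀ A, Category.{v'} (E A)] (P : ClovenBifib C E)
    (hBC : P.BCCond)
    {A B : C} (f : B ⟶ A) {BAB : C} (f₁ f₂ : BAB ⟶ B)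
    (hf : f₁ ≫ f = f₂ ≫ f) (hkp : IsPullback f₁ f₂ f f)
    (Δ : B ⟶ BAB) (hΔ₁ : Δ ≫ f₁ = 𝟙 B) (hΔ₂ : Δ ≫ f₂ = 𝟙 B)
    {Q : C} (π₁ π₂ : Q ⟶ BAB) (hππ : π₂ ≫ f₂ = π₁ ≫ f₁) (hpbQ : IsPullback π₂ π₁ f₂ f₁)
    (π : Q ⟶ BAB) (hπ₁ : π ≫ f₁ = π₂ ≫ f₁) (hπ₂ : π ≫ f₂ = π₁ ≫ f₂) :
    -- left unit law: μ'_X ∘ η'_{T' X} = id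
    (∀ X : E B,
      P.eta' f₁ f₂ Δ hΔ₁ hΔ₂ ((P.push f₂).obj ((P.pull f₁).obj X)) ≫
        P.mu' f₁ f₂ π₁ π₂ π hππ hπ₁ hπ₂ (hBC π₂ π₁ f₂ f₁ hππ hpbQ) X = 𝟙 _) ∧
    -- right unit law: μ'_X ∘ T'(η'_X) = id
    (∀ X : E B,
      (P.push f₂).map ((P.pull f₁).map (P.eta' f₁ f₂ Δ hΔ₁ hΔ₂ X)) ≫
        P.mu' f₁ f₂ π₁ π₂ π hππ hπ₁ hπ₂ (hBC π₂ π₁ f₂ f₁ hππ hpbQ) X = 𝟙 _) ∧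
    -- associativity: μ'_X ∘ T'(μ'_X) = μ'_X ∘ μ'_{T' X}
    (∀ X : E B,
      (P.push f₂).map ((P.pull f₁).map
          (P.mu' f₁ f₂ π₁ π₂ π hππ hπ₁ hπ₂ (hBC π₂ π₁ f₂ f₁ hππ hpbQ) X)) ≫
        P.mu' f₁ f₂ π₁ π₂ π hππ hπ₁ hπ₂ (hBC π₂ π₁ f₂ f₁ hππ hpbQ) X =
      P.mu' f₁ f₂ π₁ π₂ π hππ hπ₁ hπ₂ (hBC π₂ π₁ f₂ f₁ hππ hpbQ)
          ((P.push f₂).obj ((P.pull f₁).obj X)) ≫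
        P.mu' f₁ f₂ π₁ π₂ π hππ hπ₁ hπ₂ (hBC π₂ π₁ f₂ f₁ hππ hpbQ) X) ∧
    -- BC₁ ∘ η′ = η_f
    (∀ X : E B,
      P.eta' f₁ f₂ Δ hΔ₁ hΔ₂ X ≫ (P.BC f₁ f₂ f f hf).app X =
        (P.adj f).unit.app X) ∧
    -- BC₁ ∘ μ′ = μ ∘ (BC₁ ∗ BC₁)
    (∀ X : E B,
      P.mu' f₁ f₂ π₁ π₂ π hππ hπ₁ hπ₂ (hBC π₂ π₁ f₂ f₁ hππ hpbQ) X ≫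
          (P.BC f₁ f₂ f f hf).app X =
        ((P.BC f₁ f₂ f f hf).app ((P.push f₂).obj ((P.pull f₁).obj X)) ≫
          (P.pull f).map ((P.push f).map ((P.BC f₁ f₂ f f hf).app X))) ≫
          P.Tmul f X) := by
  haveI hI : IsIso (P.BC f₁ f₂ f f hf) := hBC f₁ f₂ f f hf hkp
  have hmu : ∀ X : E B,
      P.mu' f₁ f₂ π₁ π₂ π hππ hπ₁ hπ₂ (hBC π₂ π₁ f₂ f₁ hππ hpbQ) X ≫
        (P.BC f₁ f₂ f f hf).app X =
      ((P.BC f₁ f₂ f f hf).app ((P.push f₂).obj ((P.pull f₁).obj X)) ≫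
        (P.pull f).map ((P.push f).map ((P.BC f₁ f₂ f f hf).app X))) ≫ P.Tmul f X :=
    fun X => P.muBC f f₁ f₂ hf π₁ π₂ π hππ hπ₁ hπ₂ (hBC π₂ π₁ f₂ f₁ hππ hpbQ) X
  have heta : ∀ X : E B,
      P.eta' f₁ f₂ Δ hΔ₁ hΔ₂ X ≫ (P.BC f₁ f₂ f f hf).app X = (P.adj f).unit.app X :=
    fun X => P.etaBC f f₁ f₂ hf Δ hΔ₁ hΔ₂ X
  refine ⟨fun X => ?_, fun X => ?_, fun X => ?_, heta, hmu⟩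
  · -- left unit law
    haveI : IsIso ((P.BC f₁ f₂ f f hf).app X) := inferInstance
    rw [← cancel_mono ((P.BC f₁ f₂ f f hf).app X), Category.assoc, hmu X, Category.id_comp]
    slice_lhs 1 2 => rw [heta ((P.push f₂).obj ((P.pull f₁).obj X))]
    have hn : (P.adj f).unit.app ((P.push f₂).obj ((P.pull f₁).obj X)) ≫
        (P.pull f).map ((P.push f).map ((P.BC f₁ f₂ f f hf).app X)) =
        (P.BC f₁ f₂ f f hf).app X ≫
          (P.adj f).unit.app ((P.pull f).obj ((P.push f).obj X)) :=
      ((P.adj f).unit.naturality ((P.BC f₁ f₂ f f hf).app X)).symm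
    rw [Category.assoc, reassoc_of% hn,
      show P.Tmul f X = (P.pull f).map ((P.adj f).counit.app ((P.push f).obj X)) from rfl,
      (P.adj f).right_triangle_components, Category.comp_id]
  · -- right unit law
    haveI : IsIso ((P.BC f₁ f₂ f f hf).app X) := inferInstance
    rw [← cancel_mono ((P.BC f₁ f₂ f f hf).app X), Category.assoc, hmu X, Category.id_comp]
    have hn : (P.push f₂).map ((P.pull f₁).map (P.eta' f₁ f₂ Δ hΔ₁ hΔ₂ X)) ≫
        (P.BC f₁ f₂ f f hf).app ((P.push f₂).obj ((P.pull f₁).obj X)) =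
        (P.BC f₁ f₂ f f hf).app X ≫
          (P.pull f).map ((P.push f).map (P.eta' f₁ f₂ Δ hΔ₁ hΔ₂ X)) :=
      (P.BC f₁ f₂ f f hf).naturality (P.eta' f₁ f₂ Δ hΔ₁ hΔ₂ X)
    slice_lhs 1 2 => rw [hn]
    have h2 : (P.pull f).map ((P.push f).map (P.eta' f₁ f₂ Δ hΔ₁ hΔ₂ X)) ≫
        (P.pull f).map ((P.push f).map ((P.BC f₁ f₂ f f hf).app X)) ≫ P.Tmul f X = 𝟙 _ := by
      rw [show P.Tmul f X = (P.pull f).map ((P.adj f).counit.app ((P.push f).obj X)) from rfl,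
        ← Functor.map_comp, ← Functor.map_comp]
      have h3 : (P.push f).map (P.eta' f₁ f₂ Δ hΔ₁ hΔ₂ X) ≫
          (P.push f).map ((P.BC f₁ f₂ f f hf).app X) ≫
          (P.adj f).counit.app ((P.push f).obj X) = 𝟙 _ := by
        rw [← Category.assoc, ← Functor.map_comp, heta X,
          (P.adj f).left_triangle_components]
      rw [h3, CategoryTheory.Functor.map_id]
    simp only [Category.assoc]
    rw [h2]
    simp
  · -- associativity
    haveI : IsIso ((P.BC f₁ f₂ f f hf).app X) := inferInstance
    haveI : IsIso ((P.BC f₁ f₂ f f hf).app ((P.push f₂).obj ((P.pull f₁).obj X))) :=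
      inferInstance
    haveI : IsIso ((P.BC f₁ f₂ f f hf).app ((P.push f₂).obj ((P.pull f₁).obj
      ((P.push f₂).obj ((P.pull f₁).obj X))))) := inferInstance
    rw [← cancel_mono ((P.BC f₁ f₂ f f hf).app X), Category.assoc, Category.assoc,
      hmu X]
    have hnμ : (P.push f₂).map ((P.pull f₁).map
        (P.mu' f₁ f₂ π₁ π₂ π hππ hπ₁ hπ₂ (hBC π₂ π₁ f₂ f₁ hππ hpbQ) X)) ≫
        (P.BC f₁ f₂ f f hf).app ((P.push f₂).obj ((P.pull f₁).obj X)) =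
        (P.BC f₁ f₂ f f hf).app ((P.push f₂).obj ((P.pull f₁).obj
          ((P.push f₂).obj ((P.pull f₁).obj X)))) ≫
          (P.pull f).map ((P.push f).map
            (P.mu' f₁ f₂ π₁ π₂ π hππ hπ₁ hπ₂ (hBC π₂ π₁ f₂ f₁ hππ hpbQ) X)) :=
      (P.BC f₁ f₂ f f hf).naturality _
    slice_lhs 1 2 => rw [hnμ]
    slice_rhs 1 2 => rw [hmu ((P.push f₂).obj ((P.pull f₁).obj X))]
    simp only [Category.assoc]
    rw [cancel_epi]
    have hmm : (P.pull f).map ((P.push f).map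
        (P.mu' f₁ f₂ π₁ π₂ π hππ hπ₁ hπ₂ (hBC π₂ π₁ f₂ f₁ hππ hpbQ) X)) ≫
        (P.pull f).map ((P.push f).map ((P.BC f₁ f₂ f f hf).app X)) =
        (P.pull f).map ((P.push f).map ((P.BC f₁ f₂ f f hf).app
          ((P.push f₂).obj ((P.pull f₁).obj X)))) ≫
          (P.pull f).map ((P.push f).map ((P.pull f).map ((P.push f).map
            ((P.BC f₁ f₂ f f hf).app X)))) ≫
          (P.pull f).map ((P.push f).map (P.Tmul f X)) := by
      rw [← Functor.map_comp, ← Functor.map_comp, hmu X]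
      simp only [Functor.map_comp, Category.assoc]
    rw [reassoc_of% hmm, cancel_epi]
    -- remaining: associativity of the monad multiplication of T_f
    have na : (P.push f).map ((P.pull f).map ((P.push f).map ((P.BC f₁ f₂ f f hf).app X))) ≫
        (P.adj f).counit.app ((P.push f).obj ((P.pull f).obj ((P.push f).obj X))) =
        (P.adj f).counit.app ((P.push f).obj ((P.push f₂).obj ((P.pull f₁).obj X))) ≫
          (P.push f).map ((P.BC f₁ f₂ f f hf).app X) :=
      (P.adj f).counit.naturality ((P.push f).map ((P.BC f₁ f₂ f f hf).app X))
    have nb : (P.push f).map ((P.pull f).map ((P.adj f).counit.app ((P.push f).obj X))) ≫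
        (P.adj f).counit.app ((P.push f).obj X) =
        (P.adj f).counit.app ((P.push f).obj ((P.pull f).obj ((P.push f).obj X))) ≫
          (P.adj f).counit.app ((P.push f).obj X) :=
      (P.adj f).counit.naturality ((P.adj f).counit.app ((P.push f).obj X))
    have b' : (P.pull f).map ((P.push f).map ((P.pull f).map
          ((P.adj f).counit.app ((P.push f).obj X)))) ≫
        (P.pull f).map ((P.adj f).counit.app ((P.push f).obj X)) =
        (P.pull f).map ((P.adj f).counit.app ((P.push f).obj ((P.pull f).obj
          ((P.push f).obj X)))) ≫
          (P.pull f).map ((P.adj f).counit.app ((P.push f).obj X)) := by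
      rw [← Functor.map_comp, ← Functor.map_comp, nb]
    have a' : (P.pull f).map ((P.push f).map ((P.pull f).map ((P.push f).map
          ((P.BC f₁ f₂ f f hf).app X)))) ≫
        (P.pull f).map ((P.adj f).counit.app ((P.push f).obj ((P.pull f).obj
          ((P.push f).obj X)))) =
        (P.pull f).map ((P.adj f).counit.app ((P.push f).obj
          ((P.push f₂).obj ((P.pull f₁).obj X)))) ≫
          (P.pull f).map ((P.push f).map ((P.BC f₁ f₂ f f hf).app X)) := by
      rw [← Functor.map_comp, ← Functor.map_comp, na]
    rw [show P.Tmul f X = (P.pull f).map ((P.adj f).counit.app ((P.push f).obj X)) from rfl,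
      show P.Tmul f ((P.push f₂).obj ((P.pull f₁).obj X)) =
        (P.pull f).map ((P.adj f).counit.app ((P.push f).obj
          ((P.push f₂).obj ((P.pull f₁).obj X)))) from rfl]
    rw [b', reassoc_of% a']
end

section
/- (Round trip on algebras) Assume the Beck–Chevalley property. Let (X, α) be a T_f-algebra, let φ := f₂^*(α) ∘ (χ₁)_{f_! X} ∘ f₁^*((η_f)_X) : f₁^* X ⟶ f₂^* X and let β := (ε_{f₂})_X ∘ (f₂)_!(φ) : (f₂)_!(f₁^* X) ⟶ X. Then β ∘ (BC₁⁻¹)_X = α. -/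
open CategoryTheory

universe v' u' v u

open BRPaper ClovenBifib CategoryTheory

/-- **round trip on algebras.** Assume the Beck–Chevalley property.
For a `T_f`-algebra `(X, α)`, with `φ` the induced descent datum and
`β := (ε_{f₂})_X ∘ (f₂)_!(φ)`, we have `β ∘ (BC₁⁻¹)_X = α`. -/
theorem benabou_roubaud_round_trip_algebras
    {C : Type u} [Category.{v} C] [Limits.HasPullbacks C]
    {E : C → Type u'} [∀ A, Category.{v'} (E A)] (P : ClovenBifib C E)
    (hBC : P.BCCond)
    {A B : C} (f : B ⟶ A) {BAB : C} (f₁ f₂ : BAB ⟶ B)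
    (hf : f₁ ≫ f = f₂ ≫ f) (hkp : IsPullback f₁ f₂ f f)
    (X : E B) (α : (P.pull f).obj ((P.push f).obj X) ⟶ X)
    (hTA1 : (P.adj f).unit.app X ≫ α = 𝟙 X)
    (hTA2 : P.Tmul f X ≫ α = (P.pull f).map ((P.push f).map α) ≫ α) :
    (P.BCinv f₁ f₂ f f hf (hBC f₁ f₂ f f hf hkp)).app X ≫
        P.betaMap f₁ f₂ X (P.phi f f₁ f₂ hf X α) = α := by
  have hiso := hBC f₁ f₂ f f hf hkp
  rw [← cancel_epi ((P.BC f₁ f₂ f f hf).app X), ← Category.assoc]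
  have h1 : (P.BC f₁ f₂ f f hf).app X ≫ (P.BCinv f₁ f₂ f f hf hiso).app X = 𝟙 _ := by
    rw [ClovenBifib.BCinv, ← NatTrans.comp_app, IsIso.hom_inv_id, NatTrans.id_app]
  rw [h1, Category.id_comp]
  simp only [ClovenBifib.betaMap, ClovenBifib.phi, ClovenBifib.BC, ClovenBifib.mate,
    ClovenBifib.chi1, Iso.trans_hom, eqToIso.hom, Iso.symm_hom, NatTrans.comp_app,
    Functor.whiskerRight_app, Functor.whiskerLeft_app, Functor.comp_map, Functor.map_comp,
    eqToHom_app, Category.assoc]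
  rw [Adjunction.counit_naturality]
  rfl
end

section
/- (Round trip on descent data) Assume the Beck–Chevalley property. Let (X, φ) be an object of Desc_p(f), let β := (ε_{f₂})_X ∘ (f₂)_!(φ) : (f₂)_!(f₁^* X) ⟶ X and let α := β ∘ (BC₁⁻¹)_X : f^*(f_! X) ⟶ X. Then f₂^*(α) ∘ (χ₁)_{f_! X} ∘ f₁^*((η_f)_X) = φ. -/
open CategoryTheory

universe v' u' v u

open BRPaper ClovenBifib CategoryTheory

/-- **round trip on descent data.** Assume the Beck–Chevalley
property. For `(X, φ)` in `Desc_p(f)`, with `β := (ε_{f₂})_X ∘ (f₂)_!(φ)` and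
`α := β ∘ (BC₁⁻¹)_X`, we have `f₂^*(α) ∘ (χ₁)_{f_! X} ∘ f₁^*((η_f)_X) = φ`. -/
theorem benabou_roubaud_round_trip_descent
    {C : Type u} [Category.{v} C] [Limits.HasPullbacks C]
    {E : C → Type u'} [∀ A, Category.{v'} (E A)] (P : ClovenBifib C E)
    (hBC : P.BCCond)
    {A B : C} (f : B ⟶ A) {BAB : C} (f₁ f₂ : BAB ⟶ B)
    (hf : f₁ ≫ f = f₂ ≫ f) (hkp : IsPullback f₁ f₂ f f)
    (Δ : B ⟶ BAB) (hΔ₁ : Δ ≫ f₁ = 𝟙 B) (hΔ₂ : Δ ≫ f₂ = 𝟙 B)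
    {Q : C} (π₁ π₂ : Q ⟶ BAB) (hππ : π₂ ≫ f₂ = π₁ ≫ f₁) (hpbQ : IsPullback π₂ π₁ f₂ f₁)
    (π : Q ⟶ BAB) (hπ₁ : π ≫ f₁ = π₂ ≫ f₁) (hπ₂ : π ≫ f₂ = π₁ ≫ f₂)
    (X : E B) (φ : (P.pull f₁).obj X ≅ (P.pull f₂).obj X)
    (hDD1 : (P.dIso f₁ Δ hΔ₁).hom.app X ≫ (P.pull Δ).map φ.hom =
      (P.dIso f₂ Δ hΔ₂).hom.app X)
    (hDD2 : (P.pull π₂).map φ.hom ≫ (P.jCross f₁ f₂ π₁ π₂ hππ).hom.app X ≫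
        (P.pull π₁).map φ.hom =
      (P.jIso f₁ π π₂ hπ₁).inv.app X ≫ (P.pull π).map φ.hom ≫
        (P.jIso f₂ π π₁ hπ₂).hom.app X) :
    P.phi f f₁ f₂ hf X
        ((P.BCinv f₁ f₂ f f hf (hBC f₁ f₂ f f hf hkp)).app X ≫
          P.betaMap f₁ f₂ X φ.hom) = φ.hom := by
  have hiso := hBC f₁ f₂ f f hf hkp
  have cancel : (P.BC f₁ f₂ f f hf).app X ≫ (P.BCinv f₁ f₂ f f hf hiso).app X = 𝟙 _ := by
    rw [BCinv, ← NatTrans.comp_app, IsIso.hom_inv_id, NatTrans.id_app]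
  have key : (P.pull f₁).map ((P.adj f).unit.app X) ≫
      (P.chi1 f f₁ f₂ hf).hom.app ((P.push f).obj X) =
      φ.hom ≫ (P.adj f₂).unit.app ((P.pull f₂).obj X) ≫
        (P.pull f₂).map ((P.push f₂).map φ.inv ≫ (P.BC f₁ f₂ f f hf).app X) := by
    have nat := (P.adj f₂).unit.naturality
      (φ.inv ≫ (P.pull f₁).map ((P.adj f).unit.app X) ≫
        (P.chi1 f f₁ f₂ hf).hom.app ((P.push f).obj X))
    have tri := (P.adj f₂).right_triangle_components
      ((P.pull f).obj ((P.push f).obj X))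
    simp only [BC, mate, chi1, NatTrans.comp_app, Functor.whiskerRight_app, Functor.whiskerLeft_app,
      Functor.comp_map, Iso.trans_hom, eqToIso.hom, Iso.symm_hom, Functor.comp_obj,
      Functor.id_obj, Functor.id_map, Functor.map_comp, Category.assoc] at nat tri ⊢
    rw [← reassoc_of% nat, tri]
    simp
  rw [phi, betaMap, Functor.map_comp, Functor.map_comp, reassoc_of% key]
  simp only [← Functor.map_comp, Category.assoc, reassoc_of% cancel]
  simp [← Functor.map_comp]
end

section
/- (Round trip on actions) Assume the Beck–Chevalley property. Let (X, β) be an action of Eq(f) on p, let α := β ∘ (BC₁⁻¹)_X : f^*(f_! X) ⟶ X and let φ := f₂^*(α) ∘ (χ₁)_{f_! X} ∘ f₁^*((η_f)_X) : f₁^* X ⟶ f₂^* X. Then (ε_{f₂})_X ∘ (f₂)_!(φ) = β. -/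
open CategoryTheory

universe v' u' v u

open BRPaper ClovenBifib CategoryTheory

/-- **round trip on actions.** Assume the Beck–Chevalley property.
For an action `(X, β)` of `Eq(f)` on `p`, with `α := β ∘ (BC₁⁻¹)_X` and
`φ := f₂^*(α) ∘ (χ₁)_{f_! X} ∘ f₁^*((η_f)_X)`, we have
`(ε_{f₂})_X ∘ (f₂)_!(φ) = β`. -/
theorem benabou_roubaud_round_trip_actions
    {C : Type u} [Category.{v} C] [Limits.HasPullbacks C]
    {E : C → Type u'} [∀ A, Category.{v'} (E A)] (P : ClovenBifib C E)
    (hBC : P.BCCond)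
    {A B : C} (f : B ⟶ A) {BAB : C} (f₁ f₂ : BAB ⟶ B)
    (hf : f₁ ≫ f = f₂ ≫ f) (hkp : IsPullback f₁ f₂ f f)
    (Δ : B ⟶ BAB) (hΔ₁ : Δ ≫ f₁ = 𝟙 B) (hΔ₂ : Δ ≫ f₂ = 𝟙 B)
    {Q : C} (π₁ π₂ : Q ⟶ BAB) (hππ : π₂ ≫ f₂ = π₁ ≫ f₁) (hpbQ : IsPullback π₂ π₁ f₂ f₁)
    (π : Q ⟶ BAB) (hπ₁ : π ≫ f₁ = π₂ ≫ f₁) (hπ₂ : π ≫ f₂ = π₁ ≫ f₂)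
    (X : E B) (β : (P.push f₂).obj ((P.pull f₁).obj X) ⟶ X)
    (hAC1 : P.eta' f₁ f₂ Δ hΔ₁ hΔ₂ X ≫ β = 𝟙 X)
    (hAC2 : P.mu' f₁ f₂ π₁ π₂ π hππ hπ₁ hπ₂ (hBC π₂ π₁ f₂ f₁ hππ hpbQ) X ≫ β =
      (P.push f₂).map ((P.pull f₁).map β) ≫ β) :
    P.betaMap f₁ f₂ X
        (P.phi f f₁ f₂ hf X
          ((P.BCinv f₁ f₂ f f hf (hBC f₁ f₂ f f hf hkp)).app X ≫ β)) = β := by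
  set i := (P.BCinv f₁ f₂ f f hf (hBC f₁ f₂ f f hf hkp)) with hi
  have hinv : (P.BC f₁ f₂ f f hf).app X ≫ i.app X = 𝟙 _ := by
    rw [hi, ClovenBifib.BCinv, ← NatTrans.comp_app, IsIso.hom_inv_id, NatTrans.id_app]
  have key : (P.BC f₁ f₂ f f hf).app X =
      (P.push f₂).map ((P.pull f₁).map ((P.adj f).unit.app X)) ≫
      (P.push f₂).map ((P.chi1 f f₁ f₂ hf).hom.app ((P.push f).obj X)) ≫
      (P.adj f₂).counit.app ((P.pull f).obj ((P.push f).obj X)) := by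
    simp [ClovenBifib.BC, ClovenBifib.mate, ClovenBifib.chi1, eqToHom_app]
  have e1 : (P.push f₂).map ((P.pull f₂).map β) ≫ (P.adj f₂).counit.app X
      = (P.adj f₂).counit.app ((P.push f₂).obj ((P.pull f₁).obj X)) ≫ β :=
    (P.adj f₂).counit.naturality β
  have e2 : (P.push f₂).map ((P.pull f₂).map (i.app X)) ≫
        (P.adj f₂).counit.app ((P.push f₂).obj ((P.pull f₁).obj X))
      = (P.adj f₂).counit.app ((P.pull f).obj ((P.push f).obj X)) ≫ i.app X :=
    (P.adj f₂).counit.naturality (i.app X)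
  simp only [ClovenBifib.betaMap, ClovenBifib.phi, Functor.map_comp, Category.assoc]
  rw [e1, reassoc_of% e2, ← reassoc_of% key, ← Category.assoc, hinv]
  simp
end
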